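/- arXiv:2108.11946 — 3 statements merged into one kernel-verified Lean document; each statement's English description precedes it below -/
import Mathlib

section
/- Let H be a connected graph on k ≥ 2 vertices with independence number α = α(H). Then for every positive integer n, r(nH) ≥ (2k − α)·n + r(𝒟_c(H), 𝒟(H)) − 2. In particular, the complete graph on (2k − α)·n + r(𝒟_c(H), 𝒟(H)) − 3 vertices admits a 2-colouring of its edges with no monochromatic copy of nH. -/
open Finset

/-- There is a copy (subgraph embedding) of `H` in `G` whose image lies in `A`. -/
def SimpleGraph.CopyIn {W V : Type*} (H : SimpleGraph W) (G : SimpleGraph V) (A : Set V) :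
    Prop :=
  ∃ f : W → V, Function.Injective f ∧ (∀ a, f a ∈ A) ∧
    ∀ ⦃a b⦄, H.Adj a b → G.Adj (f a) (f b)

/-- There is a copy of `H` in `G`. -/
def SimpleGraph.ContainsCopy {W V : Type*} (H : SimpleGraph W) (G : SimpleGraph V) : Prop :=
  H.CopyIn G Set.univ

/-- The disjoint union of `n` copies of `H`, denoted `nH` in the paper. -/
def SimpleGraph.nCopies {W : Type*} (n : ℕ) (H : SimpleGraph W) : SimpleGraph (Fin n × W) where
  Adj x y := x.1 = y.1 ∧ H.Adj x.2 y.2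
  symm := ⟨fun x y h => ⟨h.1.symm, h.2.symm⟩⟩
  loopless := ⟨fun x h => H.irrefl h.2⟩

/-- `N` is Ramsey for `H`: every red/blue colouring of the edges of `K_N` (encoded by its
red graph `R`, the blue graph being `Rᶜ`) contains a monochromatic copy of `H`. -/
def SimpleGraph.RamseyProp {W : Type*} (H : SimpleGraph W) (N : ℕ) : Prop :=
  ∀ R : SimpleGraph (Fin N), H.ContainsCopy R ∨ H.ContainsCopy Rᶜ

/-- The Ramsey number `r(H)`. -/
noncomputable def SimpleGraph.ramsey {W : Type*} (H : SimpleGraph W) : ℕ :=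
  sInf {N | H.RamseyProp N}

/-- `I` is an independent set of `G`. -/
def SimpleGraph.IsIndep {V : Type*} (G : SimpleGraph V) (I : Set V) : Prop :=
  I.Pairwise fun a b => ¬ G.Adj a b

/-- The independence number `α(G)`. -/
noncomputable def SimpleGraph.indepNumber {V : Type*} (G : SimpleGraph V) : ℕ :=
  sSup {n | ∃ I : Finset V, G.IsIndep ↑I ∧ I.card = n}

/-- `I` is an independent set of `G`, maximal with respect to inclusion. -/
def SimpleGraph.IsMaximalIndep {V : Type*} (G : SimpleGraph V) (I : Set V) : Prop :=
  G.IsIndep I ∧ ∀ J : Set V, G.IsIndep J → I ⊆ J → J = I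

/-- `R` contains a copy of some member of the family `𝒟(G)` of graphs obtained from `G`
by removing a maximal independent set. -/
def SimpleGraph.ContainsCopyOfD {V U : Type*} (G : SimpleGraph V) (R : SimpleGraph U) : Prop :=
  ∃ I : Set V, G.IsMaximalIndep I ∧ (G.induce Iᶜ).ContainsCopy R

/-- `R` contains a copy of some connected component of `H`, i.e. of a member of `𝒞(H)`. -/
def SimpleGraph.ContainsCopyOfComp {V U : Type*} (H : SimpleGraph V) (R : SimpleGraph U) :
    Prop :=
  ∃ c : H.ConnectedComponent, (H.induce c.supp).ContainsCopy R

/-- `R` contains a copy of some member of the family `𝒟_c(H)`: graphs obtained by removing a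
maximal independent set of `H` and taking a connected component of the remainder. -/
def SimpleGraph.ContainsCopyOfDc {V U : Type*} (H : SimpleGraph V) (R : SimpleGraph U) : Prop :=
  ∃ I : Set V, H.IsMaximalIndep I ∧
    ∃ c : (H.induce Iᶜ).ConnectedComponent, ((H.induce Iᶜ).induce c.supp).ContainsCopy R

/-- `R` contains a copy of some member of the family `𝒟'_c(H)`: graphs obtained by removing an
independent set of `H` of maximum size `α(H)` and taking a connected component of the
remainder. -/
def SimpleGraph.ContainsCopyOfDc' {V U : Type*} (H : SimpleGraph V) (R : SimpleGraph U) : Prop :=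
  ∃ I : Set V, H.IsIndep I ∧ I.ncard = H.indepNumber ∧
    ∃ c : (H.induce Iᶜ).ConnectedComponent, ((H.induce Iᶜ).induce c.supp).ContainsCopy R

/-- The asymmetric Ramsey number `r(G, H)`. -/
noncomputable def SimpleGraph.ramsey2 {V W : Type*} (G : SimpleGraph V) (H : SimpleGraph W) :
    ℕ :=
  sInf {N | ∀ R : SimpleGraph (Fin N), G.ContainsCopy R ∨ H.ContainsCopy Rᶜ}

/-- The Ramsey number `r(𝒟(G), H)`. -/
noncomputable def SimpleGraph.ramseyDFam {V W : Type*} (G : SimpleGraph V)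
    (H : SimpleGraph W) : ℕ :=
  sInf {N | ∀ R : SimpleGraph (Fin N), G.ContainsCopyOfD R ∨ H.ContainsCopy Rᶜ}

/-- The Ramsey number `r(𝒟(G), 𝒞(H))`. -/
noncomputable def SimpleGraph.ramseyDCFam {V W : Type*} (G : SimpleGraph V)
    (H : SimpleGraph W) : ℕ :=
  sInf {N | ∀ R : SimpleGraph (Fin N), G.ContainsCopyOfD R ∨ H.ContainsCopyOfComp Rᶜ}

/-- The Ramsey number `r(𝒟_c(H), 𝒟(H))`. -/
noncomputable def SimpleGraph.ramseyDcD {V : Type*} (H : SimpleGraph V) : ℕ :=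
  sInf {N | ∀ R : SimpleGraph (Fin N), H.ContainsCopyOfDc R ∨ H.ContainsCopyOfD Rᶜ}

/-- The Ramsey number `r(𝒟'_c(H), 𝒟(H))`. -/
noncomputable def SimpleGraph.ramseyDc'D {V : Type*} (H : SimpleGraph V) : ℕ :=
  sInf {N | ∀ R : SimpleGraph (Fin N), H.ContainsCopyOfDc' R ∨ H.ContainsCopyOfD Rᶜ}

/-- An `H`-tie in the colouring with red graph `Red`: a set of `2|H| - α(H)` vertices
containing both a red and a blue copy of `H`. -/
def SimpleGraph.IsTie {V : Type*} {k : ℕ} (H : SimpleGraph (Fin k)) (Red : SimpleGraph V)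
    (S : Finset V) : Prop :=
  S.card = 2 * k - H.indepNumber ∧ H.CopyIn Red ↑S ∧ H.CopyIn Redᶜ ↑S

/-- A `K_k`-tiling of `G`: pairwise disjoint `k`-cliques covering all but at most
`|G| mod k` vertices. -/
def SimpleGraph.HasKkTiling {V : Type*} [Fintype V] [DecidableEq V] (G : SimpleGraph V)
    (k : ℕ) : Prop :=
  ∃ T : Finset (Finset V), (∀ S ∈ T, G.IsNClique k S) ∧
    (T : Set (Finset V)).PairwiseDisjoint id ∧
    Fintype.card V - (T.biUnion id).card ≤ Fintype.card V % k

/-- A perfect `K_k`-tiling of `G`: pairwise disjoint `k`-cliques covering all vertices. -/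
def SimpleGraph.HasPerfectKkTiling {V : Type*} [Fintype V] [DecidableEq V] (G : SimpleGraph V)
    (k : ℕ) : Prop :=
  ∃ T : Finset (Finset V), (∀ S ∈ T, G.IsNClique k S) ∧
    (T : Set (Finset V)).PairwiseDisjoint id ∧ T.biUnion id = Finset.univ

/-- `a` and `b` are joined by an edge of colour `c` (where `true` is red and `false` is blue)
in the colouring with red graph `Red`. -/
def SimpleGraph.colorAdj {V : Type*} (Red : SimpleGraph V) (c : Bool) (a b : V) : Prop :=
  if c then Red.Adj a b else Redᶜ.Adj a b


section Aux

open SimpleGraph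

universe u

/-- Closure of a predicate along walks. -/
lemma walk_closed {V : Type*} {G : SimpleGraph V} {P : V → Prop}
    (hP : ∀ u v, G.Adj u v → P u → P v) :
    ∀ {x y : V}, G.Walk x y → P x → P y := by
  intro x y p
  induction p with
  | nil => exact id
  | cons h _ ih => exact fun hx => ih (hP _ _ h hx)

/-- A walk from inside `S` to outside `S` contains a crossing edge. -/
lemma walk_cross {V : Type*} {G : SimpleGraph V} {S : Set V} :
    ∀ {x y : V}, G.Walk x y → x ∈ S → y ∉ S →
      ∃ u v, G.Adj u v ∧ u ∈ S ∧ v ∉ S := by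
  intro x y p
  induction p with
  | nil => exact fun h h' => absurd h h'
  | @cons a b c h _ ih =>
    intro ha hc
    by_cases hb : b ∈ S
    · exact ih hb hc
    · exact ⟨a, b, h, ha, hb⟩

/-- Any independent set extends to a maximal independent set. -/
lemma exists_maximal_indep {V : Type*} [Fintype V] [DecidableEq V] (G : SimpleGraph V)
    (I : Finset V) (hI : G.IsIndep ↑I) :
    ∃ J : Finset V, I ⊆ J ∧ G.IsMaximalIndep ↑J := by
  classical
  set 𝒮 : Finset (Finset V) :=
    Finset.univ.powerset.filter (fun J => G.IsIndep ↑J ∧ I ⊆ J) with h𝒮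
  have hI𝒮 : I ∈ 𝒮 := by
    simp only [h𝒮, Finset.mem_filter, Finset.mem_powerset]
    exact ⟨Finset.subset_univ _, hI, Finset.Subset.refl _⟩
  obtain ⟨J, hJmem, hJmax⟩ := Finset.exists_max_image 𝒮 Finset.card ⟨I, hI𝒮⟩
  have hJprops := (Finset.mem_filter.1 hJmem).2
  refine ⟨J, hJprops.2, hJprops.1, ?_⟩
  intro K hK hJK
  have hKfin : K.Finite := Set.toFinite K
  set K' := hKfin.toFinset with hK'
  have hKK' : (↑K' : Set V) = K := hKfin.coe_toFinset
  have hJK' : J ⊆ K' := by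
    intro x hx
    have : x ∈ K := hJK hx
    simpa [hK'] using this
  have hK'mem : K' ∈ 𝒮 := by
    simp only [h𝒮, Finset.mem_filter, Finset.mem_powerset]
    exact ⟨Finset.subset_univ _, by rw [hKK']; exact hK,
      fun x hx => hJK' (hJprops.2 hx)⟩
  have : J = K' := Finset.eq_of_subset_of_card_le hJK' (hJmax _ hK'mem)
  rw [← hKK', ← this]

/-- A clique of size at least `card U` contains a copy of any graph on `U`. -/
lemma containsCopy_of_clique {U V : Type*} [Fintype U] (G : SimpleGraph U)
    {R : SimpleGraph V} {S : Finset V} (hS : R.IsClique ↑S)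
    (hcard : Fintype.card U ≤ S.card) : G.ContainsCopy R := by
  classical
  have hcard' : Fintype.card U ≤ Fintype.card ↥(↑S : Set V) := by
    simpa using hcard
  obtain ⟨e⟩ := Function.Embedding.nonempty_of_card_le hcard'
  refine ⟨fun u => (e u).1, ?_, fun _ => trivial, ?_⟩
  · exact Subtype.coe_injective.comp e.injective
  · intro u v huv
    exact hS (e u).2 (e v).2 (fun h => huv.ne (e.injective (Subtype.ext h)))

/-- Finite Ramsey theorem (two colours, clique sizes `s` and `t`). -/
lemma ramsey_aux : ∀ (m s t : ℕ), s + t ≤ m → ∃ N : ℕ,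
    ∀ {V : Type u} (R : SimpleGraph V) (A : Finset V), N ≤ A.card →
      (∃ S : Finset V, S ⊆ A ∧ R.IsClique ↑S ∧ S.card = s) ∨
      (∃ S : Finset V, S ⊆ A ∧ Rᶜ.IsClique ↑S ∧ S.card = t) := by
  intro m
  induction m with
  | zero =>
    intro s t h
    have hs : s = 0 := by omega
    exact ⟨0, fun R A _ => Or.inl ⟨∅, Finset.empty_subset _, by simp, by simp [hs]⟩⟩
  | succ m ih =>
    intro s t hst
    match s, t with
    | 0, t => exact ⟨0, fun R A _ => Or.inl ⟨∅, Finset.empty_subset _, by simp, by simp⟩⟩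
    | s+1, 0 => exact ⟨0, fun R A _ => Or.inr ⟨∅, Finset.empty_subset _, by simp, by simp⟩⟩
    | s+1, t+1 =>
      obtain ⟨N₁, h₁⟩ := ih s (t+1) (by omega)
      obtain ⟨N₂, h₂⟩ := ih (s+1) t (by omega)
      refine ⟨N₁ + N₂ + 1, ?_⟩
      intro V R A hA
      classical
      obtain ⟨v, hv⟩ : A.Nonempty := Finset.card_pos.1 (by omega)
      set A' := A.erase v with hA'
      have hcard' : N₁ + N₂ ≤ A'.card := by
        rw [hA', Finset.card_erase_of_mem hv]
        omega
      set NR := A'.filter (fun u => R.Adj v u) with hNR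
      set NB := A'.filter (fun u => ¬ R.Adj v u) with hNB
      have hsplit : NR.card + NB.card = A'.card :=
        Finset.card_filter_add_card_filter_not _
      have hNRA : NR ⊆ A := fun x hx =>
        Finset.erase_subset _ _ (Finset.filter_subset _ _ hx)
      have hNBA : NB ⊆ A := fun x hx =>
        Finset.erase_subset _ _ (Finset.filter_subset _ _ hx)
      rcases le_or_gt N₁ NR.card with hr | hr
      · rcases h₁ R NR hr with ⟨S, hSsub, hScl, hScard⟩ | ⟨S, hSsub, hScl, hScard⟩
        · left
          have hvS : v ∉ S := fun h =>
            (Finset.mem_erase.1 (Finset.filter_subset _ _ (hSsub h))).1 rfl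
          refine ⟨insert v S, ?_, ?_, ?_⟩
          · intro x hx
            rcases Finset.mem_insert.1 hx with rfl | hx
            · exact hv
            · exact hNRA (hSsub hx)
          · rw [Finset.coe_insert]
            refine hScl.insert fun b hb _ => ?_
            exact (Finset.mem_filter.1 (hSsub hb)).2
          · rw [Finset.card_insert_of_notMem hvS, hScard]
        · exact Or.inr ⟨S, fun x hx => hNRA (hSsub hx), hScl, hScard⟩
      · have hb : N₂ ≤ NB.card := by omega
        rcases h₂ R NB hb with ⟨S, hSsub, hScl, hScard⟩ | ⟨S, hSsub, hScl, hScard⟩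
        · exact Or.inl ⟨S, fun x hx => hNBA (hSsub hx), hScl, hScard⟩
        · right
          have hvS : v ∉ S := fun h =>
            (Finset.mem_erase.1 (Finset.filter_subset _ _ (hSsub h))).1 rfl
          refine ⟨insert v S, ?_, ?_, ?_⟩
          · intro x hx
            rcases Finset.mem_insert.1 hx with rfl | hx
            · exact hv
            · exact hNBA (hSsub hx)
          · rw [Finset.coe_insert]
            refine hScl.insert fun b hb hbv => ?_
            have hmem := Finset.mem_filter.1 (hSsub hb)
            have hbv' : v ≠ b := fun h =>
              (Finset.mem_erase.1 hmem.1).1 h.symm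
            exact ⟨hbv', hmem.2⟩
          · rw [Finset.card_insert_of_notMem hvS, hScard]

/-- Lift a copy along a graph homomorphism-like injective map. -/
lemma containsCopy_lift {U V W : Type*} (G : SimpleGraph U) (R : SimpleGraph W)
    (f : V → W) (hf : Function.Injective f) (R' : SimpleGraph V)
    (h : ∀ a b, R'.Adj a b → R.Adj (f a) (f b)) :
    G.ContainsCopy R' → G.ContainsCopy R := by
  rintro ⟨g, hg, -, hadj⟩
  exact ⟨f ∘ g, hf.comp hg, fun _ => trivial, fun a b hab => h _ _ (hadj hab)⟩

/-- The tripartite construction: red clique `A`, red `A–B`, blue `A–C`,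
blue clique `B`, red `B–C`, colouring `χ` inside `C`. -/
def triRed (a b : ℕ) {c : ℕ} (χ : SimpleGraph (Fin c)) :
    SimpleGraph (Fin a ⊕ (Fin b ⊕ Fin c)) where
  Adj x y :=
    match x, y with
    | Sum.inl x, Sum.inl y => x ≠ y
    | Sum.inl _, Sum.inr (Sum.inl _) => True
    | Sum.inr (Sum.inl _), Sum.inl _ => True
    | Sum.inl _, Sum.inr (Sum.inr _) => False
    | Sum.inr (Sum.inr _), Sum.inl _ => False
    | Sum.inr (Sum.inl _), Sum.inr (Sum.inl _) => False
    | Sum.inr (Sum.inl _), Sum.inr (Sum.inr _) => True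
    | Sum.inr (Sum.inr _), Sum.inr (Sum.inl _) => True
    | Sum.inr (Sum.inr x), Sum.inr (Sum.inr y) => χ.Adj x y
  symm := by
    refine ⟨?_⟩
    rintro (x | x | x) (y | y | y) h <;>
      first | exact h.symm | trivial | exact h.elim
  loopless := by
    refine ⟨?_⟩
    rintro (x | x | x) h <;>
      first | exact h rfl | exact h.elim | exact χ.irrefl h

section triRedLemmas

variable {a b c : ℕ} {χ : SimpleGraph (Fin c)}

@[simp] lemma triRed_adj_AA {x y : Fin a} :
    (triRed a b χ).Adj (Sum.inl x) (Sum.inl y) ↔ x ≠ y := Iff.rfl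
@[simp] lemma triRed_adj_AB {x : Fin a} {y : Fin b} :
    (triRed a b χ).Adj (Sum.inl x) (Sum.inr (Sum.inl y)) ↔ True := Iff.rfl
@[simp] lemma triRed_adj_BA {x : Fin b} {y : Fin a} :
    (triRed a b χ).Adj (Sum.inr (Sum.inl x)) (Sum.inl y) ↔ True := Iff.rfl
@[simp] lemma triRed_adj_AC {x : Fin a} {y : Fin c} :
    (triRed a b χ).Adj (Sum.inl x) (Sum.inr (Sum.inr y)) ↔ False := Iff.rfl
@[simp] lemma triRed_adj_CA {x : Fin c} {y : Fin a} :
    (triRed a b χ).Adj (Sum.inr (Sum.inr x)) (Sum.inl y) ↔ False := Iff.rfl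
@[simp] lemma triRed_adj_BB {x y : Fin b} :
    (triRed a b χ).Adj (Sum.inr (Sum.inl x)) (Sum.inr (Sum.inl y)) ↔ False := Iff.rfl
@[simp] lemma triRed_adj_BC {x : Fin b} {y : Fin c} :
    (triRed a b χ).Adj (Sum.inr (Sum.inl x)) (Sum.inr (Sum.inr y)) ↔ True := Iff.rfl
@[simp] lemma triRed_adj_CB {x : Fin c} {y : Fin b} :
    (triRed a b χ).Adj (Sum.inr (Sum.inr x)) (Sum.inr (Sum.inl y)) ↔ True := Iff.rfl
@[simp] lemma triRed_adj_CC {x y : Fin c} :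
    (triRed a b χ).Adj (Sum.inr (Sum.inr x)) (Sum.inr (Sum.inr y)) ↔ χ.Adj x y := Iff.rfl

end triRedLemmas

end Aux

section Core

open SimpleGraph

/-- In the tripartite colouring, a red copy of connected `H` uses at least
`k - α(H)` vertices of the red-clique part `A` (otherwise `χ` contains a red
member of `𝒟_c(H)`). -/
lemma red_copy_A_large {k a b c' : ℕ} {H : SimpleGraph (Fin k)}
    {χ : SimpleGraph (Fin c')} (hχ : ¬ H.ContainsCopyOfDc χ)
    (hbdd : ∀ I : Finset (Fin k), H.IsIndep ↑I → I.card ≤ H.indepNumber)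
    (g : Fin k → (Fin a ⊕ (Fin b ⊕ Fin c')))
    (hg : Function.Injective g)
    (hadj : ∀ ⦃u v⦄, H.Adj u v → (triRed a b χ).Adj (g u) (g v)) :
    k - H.indepNumber ≤ (Finset.univ.filter fun v => (g v).isLeft).card := by
  classical
  set bset : Finset (Fin k) :=
    Finset.univ.filter (fun v => ∃ x, g v = Sum.inr (Sum.inl x)) with hbset
  have hbind : H.IsIndep ↑bset := by
    intro u hu v hv hne hAdj
    obtain ⟨x, hx⟩ := (Finset.mem_filter.1 (by exact_mod_cast hu)).2
    obtain ⟨y, hy⟩ := (Finset.mem_filter.1 (by exact_mod_cast hv)).2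
    have h := hadj hAdj
    rw [hx, hy] at h
    exact h
  obtain ⟨J, hbJ, hJmax⟩ := exists_maximal_indep H bset hbind
  have hJcard : J.card ≤ H.indepNumber := hbdd J hJmax.1
  by_cases hc : ∃ v, v ∉ J ∧ ∃ x, g v = Sum.inr (Sum.inr x)
  · exfalso
    apply hχ
    obtain ⟨v₀, hv₀J, x₀, hx₀⟩ := hc
    have hv₀ : v₀ ∈ (↑J : Set (Fin k))ᶜ := by simpa using hv₀J
    set H' := H.induce (↑J : Set (Fin k))ᶜ with hH'
    set comp := H'.connectedComponentMk ⟨v₀, hv₀⟩ with hcomp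
    have hC : ∀ w : ↥((↑J : Set (Fin k))ᶜ), w ∈ comp.supp →
        ∃ x, g w.1 = Sum.inr (Sum.inr x) := by
      intro w hw
      have hreach : H'.Reachable ⟨v₀, hv₀⟩ w :=
        (SimpleGraph.ConnectedComponent.exact
          ((SimpleGraph.ConnectedComponent.mem_supp_iff _ _).1 hw)).symm
      obtain ⟨p⟩ := hreach
      refine walk_closed (P := fun u : ↥((↑J : Set (Fin k))ᶜ) =>
        ∃ x, g u.1 = Sum.inr (Sum.inr x)) ?_ p ⟨x₀, hx₀⟩
      rintro u u' huu' ⟨x, hx⟩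
      have hHadj : H.Adj u.1 u'.1 := huu'
      have h := hadj hHadj
      rw [hx] at h
      rcases h' : g u'.1 with y | y | y
      · rw [h'] at h
        exact h.elim
      · exfalso
        have hmem : u'.1 ∈ bset := Finset.mem_filter.2 ⟨Finset.mem_univ _, y, h'⟩
        exact u'.2 (by simpa using hbJ hmem)
      · exact ⟨y, rfl⟩
    refine ⟨↑J, hJmax, comp, fun w => (hC w.1 w.2).choose, ?_, fun _ => trivial, ?_⟩
    · intro w w' hww'
      have h1 := (hC w.1 w.2).choose_spec
      have h2 := (hC w'.1 w'.2).choose_spec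
      have hww2 : (hC w.1 w.2).choose = (hC w'.1 w'.2).choose := hww'
      have : g w.1.1 = g w'.1.1 := by rw [h1, h2, hww2]
      exact Subtype.ext (Subtype.ext (hg this))
    · intro w w' hadj''
      have hH : H.Adj w.1.1 w'.1.1 := hadj''
      have h := hadj hH
      rw [(hC w.1 w.2).choose_spec, (hC w'.1 w'.2).choose_spec] at h
      exact h
  · push_neg at hc
    have hsub : Finset.univ \ J ⊆ Finset.univ.filter (fun v => (g v).isLeft) := by
      intro v hv
      have hvJ : v ∉ J := (Finset.mem_sdiff.1 hv).2
      rcases h' : g v with x | x | x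
      · exact Finset.mem_filter.2 ⟨Finset.mem_univ _, by rw [h']; rfl⟩
      · exact absurd (hbJ (Finset.mem_filter.2 ⟨Finset.mem_univ _, x, h'⟩)) hvJ
      · exact absurd h' (hc v hvJ x)
    have hcard := Finset.card_le_card hsub
    rw [Finset.card_sdiff_of_subset (Finset.subset_univ _), Finset.card_univ,
      Fintype.card_fin] at hcard
    omega

/-- In the tripartite colouring, a blue copy of `H` avoiding the part `B`
yields a blue member of `𝒟(H)` inside `χᶜ`. -/
lemma blue_noB {k a b c' : ℕ} {H : SimpleGraph (Fin k)}
    {χ : SimpleGraph (Fin c')} (hχ : ¬ H.ContainsCopyOfD χᶜ)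
    (g : Fin k → (Fin a ⊕ (Fin b ⊕ Fin c'))) (hg : Function.Injective g)
    (hadj : ∀ ⦃u v⦄, H.Adj u v → (triRed a b χ)ᶜ.Adj (g u) (g v))
    (hB : ∀ v, ¬∃ x, g v = Sum.inr (Sum.inl x)) : False := by
  classical
  apply hχ
  set aset : Finset (Fin k) :=
    Finset.univ.filter (fun v => ∃ x, g v = Sum.inl x) with haset
  have haind : H.IsIndep ↑aset := by
    intro u hu v hv hne hAdj
    obtain ⟨x, hx⟩ := (Finset.mem_filter.1 (by exact_mod_cast hu)).2
    obtain ⟨y, hy⟩ := (Finset.mem_filter.1 (by exact_mod_cast hv)).2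
    have h := hadj hAdj
    rw [SimpleGraph.compl_adj, hx, hy] at h
    exact h.2 (fun hxy => h.1 (by rw [hxy]))
  obtain ⟨J, haJ, hJmax⟩ := exists_maximal_indep H aset haind
  have hCmem : ∀ v : ↥((↑J : Set (Fin k))ᶜ), ∃ x, g v.1 = Sum.inr (Sum.inr x) := by
    rintro ⟨v, hv⟩
    have hvJ : v ∉ J := by simpa using hv
    rcases h' : g v with x | x | x
    · exact absurd (haJ (Finset.mem_filter.2 ⟨Finset.mem_univ _, x, h'⟩)) hvJ
    · exact absurd ⟨x, h'⟩ (hB v)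
    · exact ⟨x, rfl⟩
  refine ⟨↑J, hJmax, ?_⟩
  refine ⟨fun v => (hCmem v).choose, ?_, fun _ => trivial, ?_⟩
  · intro v v' hvv'
    have h1 := (hCmem v).choose_spec
    have h2 := (hCmem v').choose_spec
    have hvv2 : (hCmem v).choose = (hCmem v').choose := hvv'
    have : g v.1 = g v'.1 := by rw [h1, h2, hvv2]
    exact Subtype.ext (hg this)
  · intro v v' hvv'
    have hH : H.Adj v.1 v'.1 := hvv'
    have h := hadj hH
    rw [SimpleGraph.compl_adj, (hCmem v).choose_spec, (hCmem v').choose_spec] at h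
    refine (SimpleGraph.compl_adj _ _ _).2 ⟨?_, h.2⟩
    intro hxy
    have hxy' : (hCmem v).choose = (hCmem v').choose := hxy
    exact h.1 (by rw [hxy'])

/-- A blue copy of connected `H` either lies entirely inside `B` or avoids it. -/
lemma blue_split {k a b c' : ℕ} {H : SimpleGraph (Fin k)}
    {χ : SimpleGraph (Fin c')} (hconn : H.Connected)
    (g : Fin k → (Fin a ⊕ (Fin b ⊕ Fin c')))
    (hadj : ∀ ⦃u v⦄, H.Adj u v → (triRed a b χ)ᶜ.Adj (g u) (g v)) :
    (∀ v, ∃ x, g v = Sum.inr (Sum.inl x)) ∨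
    (∀ v, ¬∃ x, g v = Sum.inr (Sum.inl x)) := by
  by_contra hcon
  push_neg at hcon
  obtain ⟨⟨w, hw⟩, ⟨u, hu⟩⟩ := hcon
  obtain ⟨p⟩ := hconn.preconnected u w
  have hw' : w ∉ {v | ∃ x, g v = Sum.inr (Sum.inl x)} := by
    rintro ⟨x, hx⟩
    exact hw x hx
  obtain ⟨p₁, q₁, hpq, hp₁, hq₁⟩ :=
    walk_cross (S := {v | ∃ x, g v = Sum.inr (Sum.inl x)}) p hu hw'
  have hblue := hadj hpq
  rw [SimpleGraph.compl_adj] at hblue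
  obtain ⟨x, hx⟩ := hp₁
  apply hblue.2
  rw [hx]
  rcases h' : g q₁ with y | y | y
  · trivial
  · exact absurd ⟨y, h'⟩ hq₁
  · trivial

end Core

section Assemble

open SimpleGraph

lemma no_red_copies {k n c' : ℕ} (hn : 0 < n) {H : SimpleGraph (Fin k)}
    {χ : SimpleGraph (Fin c')} (hχ : ¬ H.ContainsCopyOfDc χ)
    (hbdd : ∀ I : Finset (Fin k), H.IsIndep ↑I → I.card ≤ H.indepNumber)
    (hα : H.indepNumber + 1 ≤ k) {b : ℕ} :
    ¬ (SimpleGraph.nCopies n H).ContainsCopy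
      (triRed ((k - H.indepNumber) * n - 1) b χ) := by
  classical
  rintro ⟨emb, hinj, -, hadj⟩
  have hbig : ∀ i : Fin n,
      k - H.indepNumber ≤
        (Finset.univ.filter fun v : Fin k => (emb (i, v)).isLeft).card := by
    intro i
    refine red_copy_A_large hχ hbdd (fun v => emb (i, v)) ?_ ?_
    · intro u v huv
      exact congrArg Prod.snd (hinj huv)
    · intro u v huv
      exact hadj (show (SimpleGraph.nCopies n H).Adj (i, u) (i, v) from (⟨rfl, huv⟩ : (i, u).1 = (i, v).1 ∧ H.Adj (i, u).2 (i, v).2))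
  have h1 : (Finset.univ.filter
      (fun p : Fin n × Fin k => (emb p).isLeft)).card ≤
        (k - H.indepNumber) * n - 1 := by
    have himg : (Finset.univ.filter
        (fun p : Fin n × Fin k => (emb p).isLeft)).image emb ⊆
          Finset.univ.image (Sum.inl : Fin ((k - H.indepNumber) * n - 1) →
            Fin ((k - H.indepNumber) * n - 1) ⊕ (Fin b ⊕ Fin c')) := by
      intro w hw
      obtain ⟨p, hp, rfl⟩ := Finset.mem_image.1 hw
      have hleft : (emb p).isLeft := (Finset.mem_filter.1 hp).2
      rcases h' : emb p with x | x
      · exact Finset.mem_image_of_mem _ (Finset.mem_univ x)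
      · rw [h'] at hleft
        simp at hleft
    calc (Finset.univ.filter (fun p : Fin n × Fin k => (emb p).isLeft)).card
        = ((Finset.univ.filter
            (fun p : Fin n × Fin k => (emb p).isLeft)).image emb).card :=
          (Finset.card_image_of_injective _ hinj).symm
      _ ≤ (Finset.univ.image (Sum.inl : Fin ((k - H.indepNumber) * n - 1) →
            Fin ((k - H.indepNumber) * n - 1) ⊕ (Fin b ⊕ Fin c'))).card :=
          Finset.card_le_card himg
      _ ≤ (Finset.univ : Finset (Fin ((k - H.indepNumber) * n - 1))).card :=
          Finset.card_image_le
      _ = (k - H.indepNumber) * n - 1 := by simp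
  have h2 : n * (k - H.indepNumber) ≤ (Finset.univ.filter
      (fun p : Fin n × Fin k => (emb p).isLeft)).card := by
    have hfib : (Finset.univ.filter
        (fun p : Fin n × Fin k => (emb p).isLeft)).card =
          ∑ i : Fin n, ((Finset.univ.filter
            (fun p : Fin n × Fin k => (emb p).isLeft)).filter
              fun p => p.1 = i).card :=
      Finset.card_eq_sum_card_fiberwise (fun p _ => Finset.mem_univ p.1)
    have hstep : ∀ i : Fin n,
        k - H.indepNumber ≤ ((Finset.univ.filter
          (fun p : Fin n × Fin k => (emb p).isLeft)).filter
            fun p => p.1 = i).card := by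
      intro i
      refine le_trans (hbig i) ?_
      refine Finset.card_le_card_of_injOn (fun v => (i, v)) ?_ ?_
      · intro v hv
        refine Finset.mem_filter.2 ⟨?_, rfl⟩
        exact Finset.mem_filter.2 ⟨Finset.mem_univ _, (Finset.mem_filter.1 hv).2⟩
      · intro v _ v' _ h
        exact congrArg Prod.snd h
    rw [hfib]
    calc n * (k - H.indepNumber) = ∑ _i : Fin n, (k - H.indepNumber) := by
          simp [mul_comm]
      _ ≤ _ := Finset.sum_le_sum fun i _ => hstep i
  have hle : n * (k - H.indepNumber) ≤ (k - H.indepNumber) * n - 1 :=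
    le_trans h2 h1
  have hka : 1 ≤ k - H.indepNumber := by omega
  have h3 : 1 * 1 ≤ n * (k - H.indepNumber) := Nat.mul_le_mul hn hka
  have h4 : (k - H.indepNumber) * n = n * (k - H.indepNumber) := Nat.mul_comm _ _
  omega

lemma no_blue_copies {k n c' : ℕ} (hk : 2 ≤ k) (hn : 0 < n)
    {H : SimpleGraph (Fin k)} (hconn : H.Connected)
    {χ : SimpleGraph (Fin c')} (hχ : ¬ H.ContainsCopyOfD χᶜ) {a : ℕ} :
    ¬ (SimpleGraph.nCopies n H).ContainsCopy (triRed a (k * n - 1) χ)ᶜ := by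
  classical
  rintro ⟨emb, hinj, -, hadj⟩
  have hadji : ∀ (i : Fin n) ⦃u v : Fin k⦄, H.Adj u v →
      (triRed a (k * n - 1) χ)ᶜ.Adj (emb (i, u)) (emb (i, v)) := by
    intro i u v huv
    exact hadj (show (SimpleGraph.nCopies n H).Adj (i, u) (i, v) from (⟨rfl, huv⟩ : (i, u).1 = (i, v).1 ∧ H.Adj (i, u).2 (i, v).2))
  by_cases hex : ∃ i : Fin n, ∀ v, ¬∃ x, emb (i, v) = Sum.inr (Sum.inl x)
  · obtain ⟨i, hi⟩ := hex
    refine blue_noB hχ (fun v => emb (i, v)) ?_ (hadji i) hi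
    intro u v huv
    exact congrArg Prod.snd (hinj huv)
  · push_neg at hex
    have hall : ∀ (i : Fin n) (v : Fin k),
        ∃ x, emb (i, v) = Sum.inr (Sum.inl x) := by
      intro i
      rcases blue_split hconn (fun v => emb (i, v)) (hadji i) with h | h
      · exact h
      · exfalso
        obtain ⟨v, x, hvx⟩ := hex i
        exact h v ⟨x, hvx⟩
    have hsub : Finset.univ.image emb ⊆ Finset.univ.image
        (fun x : Fin (k * n - 1) =>
          (Sum.inr (Sum.inl x) : Fin a ⊕ (Fin (k * n - 1) ⊕ Fin c'))) := by
      intro w hw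
      obtain ⟨⟨i, v⟩, -, rfl⟩ := Finset.mem_image.1 hw
      obtain ⟨x, hx⟩ := hall i v
      rw [hx]
      exact Finset.mem_image_of_mem _ (Finset.mem_univ x)
    have hc1 : (Finset.univ.image emb).card ≤ k * n - 1 := by
      calc (Finset.univ.image emb).card
          ≤ (Finset.univ.image (fun x : Fin (k * n - 1) =>
              (Sum.inr (Sum.inl x) : Fin a ⊕ (Fin (k * n - 1) ⊕ Fin c')))).card :=
            Finset.card_le_card hsub
        _ ≤ (Finset.univ : Finset (Fin (k * n - 1))).card := Finset.card_image_le
        _ = k * n - 1 := by simp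
    rw [Finset.card_image_of_injective _ hinj, Finset.card_univ] at hc1
    have hcardprod : Fintype.card (Fin n × Fin k) = n * k := by simp
    rw [hcardprod] at hc1
    have hcomm : n * k = k * n := Nat.mul_comm _ _
    have hk1 : 1 * 2 ≤ n * k := Nat.mul_le_mul hn hk
    omega

end Assemble

/-- For a connected graph `H` on `k ≥ 2` vertices with `α = α(H)` and every
`n ≥ 1`, `r(nH) ≥ (2k - α)·n + r(𝒟_c(H), 𝒟(H)) - 2`; in particular the complete graph on
`(2k - α)·n + r(𝒟_c(H), 𝒟(H)) - 3` vertices admits a 2-colouring with no monochromatic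
`nH`. -/
theorem ramsey_nCopies_lower_Dc (k : ℕ) (hk : 2 ≤ k) (H : SimpleGraph (Fin k))
    (hconn : H.Connected) (n : ℕ) (hn : 0 < n) :
    ((2 * (k : ℤ) - (H.indepNumber : ℤ)) * n + (H.ramseyDcD : ℤ) - 2 ≤
      ((SimpleGraph.nCopies n H).ramsey : ℤ)) ∧
    ∃ Red : SimpleGraph (Fin ((2 * k - H.indepNumber) * n + H.ramseyDcD - 3)),
      ¬ (SimpleGraph.nCopies n H).ContainsCopy Red ∧
      ¬ (SimpleGraph.nCopies n H).ContainsCopy Redᶜ := by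
  classical
  -- H has an edge
  obtain ⟨x0, y0, hxy⟩ : ∃ x y, H.Adj x y := by
    by_contra hcon
    push_neg at hcon
    have hall : ∀ {u v : Fin k}, H.Walk u v → u = v := by
      intro u v p
      induction p with
      | nil => rfl
      | cons h _ _ => exact absurd h (hcon _ _)
    have h0 : (⟨0, by omega⟩ : Fin k) = ⟨1, by omega⟩ := by
      obtain ⟨p⟩ := hconn.preconnected _ _
      exact hall p
    simp [Fin.ext_iff] at h0
  have hnotuniv : ∀ I : Set (Fin k), H.IsIndep I → I ≠ Set.univ := by
    intro I hI hIuniv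
    have hx : x0 ∈ I := hIuniv ▸ Set.mem_univ _
    have hy : y0 ∈ I := hIuniv ▸ Set.mem_univ _
    exact hI hx hy hxy.ne hxy
  have hbdd : BddAbove {m | ∃ I : Finset (Fin k), H.IsIndep ↑I ∧ I.card = m} := by
    refine ⟨k, ?_⟩
    rintro m ⟨I, -, rfl⟩
    exact le_trans (Finset.card_le_univ I) (by simp)
  have hindep_le : ∀ I : Finset (Fin k), H.IsIndep ↑I → I.card ≤ H.indepNumber :=
    fun I h => le_csSup hbdd ⟨I, h, rfl⟩
  have hαk : H.indepNumber + 1 ≤ k := by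
    have hle : H.indepNumber ≤ k - 1 := by
      refine csSup_le ⟨0, ∅, by simp [SimpleGraph.IsIndep], by simp⟩ ?_
      rintro m ⟨I, hI, rfl⟩
      by_contra hm
      push_neg at hm
      have hIk : I.card = k :=
        le_antisymm (le_trans (Finset.card_le_univ I) (by simp)) (by omega)
      have hIuniv : I = Finset.univ := Finset.eq_univ_of_card I (by simpa using hIk)
      exact hnotuniv ↑I hI (by rw [hIuniv]; simp)
    omega
  have hDcD_def : H.ramseyDcD = sInf {N | ∀ R : SimpleGraph (Fin N),
      H.ContainsCopyOfDc R ∨ H.ContainsCopyOfD Rᶜ} := rfl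
  -- the 𝒟_c/𝒟 Ramsey set is nonempty (via the finite Ramsey theorem)
  obtain ⟨J₀, -, hJ₀max⟩ := exists_maximal_indep H ∅ (by simp [SimpleGraph.IsIndep])
  obtain ⟨v₀, hv₀⟩ : ∃ v, v ∈ (↑J₀ : Set (Fin k))ᶜ := by
    obtain ⟨v, hv⟩ := Set.ne_univ_iff_exists_notMem (↑J₀ : Set (Fin k)) |>.1
      (hnotuniv _ hJ₀max.1)
    exact ⟨v, hv⟩
  have hDcDne : {N | ∀ R : SimpleGraph (Fin N),
      H.ContainsCopyOfDc R ∨ H.ContainsCopyOfD Rᶜ}.Nonempty := by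
    obtain ⟨N₂, hN₂⟩ := ramsey_aux (2 * k) k k (by omega)
    refine ⟨N₂, fun R => ?_⟩
    rcases hN₂ R Finset.univ (by simp) with ⟨S, -, hcl, hcard⟩ | ⟨S, -, hcl, hcard⟩
    · left
      refine ⟨↑J₀, hJ₀max,
        (H.induce (↑J₀ : Set (Fin k))ᶜ).connectedComponentMk ⟨v₀, hv₀⟩, ?_⟩
      refine containsCopy_of_clique _ hcl ?_
      rw [hcard]
      calc Fintype.card
            ↥(((H.induce (↑J₀ : Set (Fin k))ᶜ).connectedComponentMk ⟨v₀, hv₀⟩).supp)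
          ≤ Fintype.card (Fin k) := Fintype.card_le_of_injective (fun w => w.1.1)
            (fun w w' h => Subtype.ext (Subtype.ext h))
        _ = k := by simp
    · right
      refine ⟨↑J₀, hJ₀max, ?_⟩
      refine containsCopy_of_clique _ hcl ?_
      rw [hcard]
      calc Fintype.card ↥((↑J₀ : Set (Fin k))ᶜ)
          ≤ Fintype.card (Fin k) :=
            Fintype.card_le_of_injective Subtype.val Subtype.coe_injective
        _ = k := by simp
  have hr1 : 1 ≤ H.ramseyDcD := by
    by_contra hr0
    push_neg at hr0
    have h0 : H.ramseyDcD = 0 := by omega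
    have hmem := Nat.sInf_mem hDcDne
    rw [← hDcD_def, h0] at hmem
    rcases hmem ⊥ with ⟨I, hImax, comp, g, -, -, -⟩ | ⟨I, hImax, g, -, -, -⟩
    · obtain ⟨w, hw⟩ := comp.exists_rep
      exact (g ⟨w, (SimpleGraph.ConnectedComponent.mem_supp_iff _ _).2 hw⟩).elim0
    · obtain ⟨v, hv⟩ := Set.ne_univ_iff_exists_notMem I |>.1 (hnotuniv I hImax.1)
      exact (g ⟨v, hv⟩).elim0
  -- extremal colouring χ on r - 1 vertices
  obtain ⟨χ, hχ1, hχ2⟩ : ∃ χ : SimpleGraph (Fin (H.ramseyDcD - 1)),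
      ¬ H.ContainsCopyOfDc χ ∧ ¬ H.ContainsCopyOfD χᶜ := by
    by_contra hcon
    have hmem : (H.ramseyDcD - 1) ∈ {N | ∀ R : SimpleGraph (Fin N),
        H.ContainsCopyOfDc R ∨ H.ContainsCopyOfD Rᶜ} := by
      intro R
      by_contra hR
      push_neg at hR
      exact hcon ⟨R, hR.1, hR.2⟩
    have hle := Nat.sInf_le hmem
    rw [← hDcD_def] at hle
    omega
  -- the construction has no monochromatic nH
  have hnored := no_red_copies (b := k * n - 1) hn hχ1 hindep_le hαk
  have hnoblue := no_blue_copies (a := (k - H.indepNumber) * n - 1) hk hn hconn hχ2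
  -- transfer to Fin N₀
  have hcardW : Fintype.card (Fin ((k - H.indepNumber) * n - 1) ⊕
      (Fin (k * n - 1) ⊕ Fin (H.ramseyDcD - 1))) =
      (2 * k - H.indepNumber) * n + H.ramseyDcD - 3 := by
    have h1 : (k - H.indepNumber) * n = k * n - H.indepNumber * n :=
      Nat.sub_mul _ _ _
    have h2 : (2 * k - H.indepNumber) * n = 2 * (k * n) - H.indepNumber * n := by
      rw [Nat.sub_mul, Nat.mul_assoc]
    have h3 : H.indepNumber * n + n ≤ k * n := by
      calc H.indepNumber * n + n = (H.indepNumber + 1) * n := by ring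
        _ ≤ k * n := Nat.mul_le_mul_right _ hαk
    simp only [Fintype.card_sum, Fintype.card_fin]
    omega
  set N₀ := (2 * k - H.indepNumber) * n + H.ramseyDcD - 3 with hN₀def
  have hcard' : Fintype.card (Fin N₀) = Fintype.card
      (Fin ((k - H.indepNumber) * n - 1) ⊕
        (Fin (k * n - 1) ⊕ Fin (H.ramseyDcD - 1))) := by
    rw [hcardW]
    simp
  let e := Fintype.equivOfCardEq hcard'
  let Red' : SimpleGraph (Fin N₀) := SimpleGraph.comap e (triRed _ _ χ)
  have hno1 : ¬ (SimpleGraph.nCopies n H).ContainsCopy Red' := fun h =>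
    hnored (containsCopy_lift _ _ e e.injective Red' (fun a b hab => hab) h)
  have hno2 : ¬ (SimpleGraph.nCopies n H).ContainsCopy Red'ᶜ := by
    intro h
    apply hnoblue
    refine containsCopy_lift _ _ e e.injective Red'ᶜ ?_ h
    intro a' b' hab
    rw [SimpleGraph.compl_adj] at hab ⊢
    exact ⟨fun hc => hab.1 (e.injective hc), hab.2⟩
  have hRamseyN₀ : ¬ (SimpleGraph.nCopies n H).RamseyProp N₀ := fun hR =>
    (hR Red').elim hno1 hno2
  have hmono : ∀ {N M : ℕ}, N ≤ M → (SimpleGraph.nCopies n H).RamseyProp N →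
      (SimpleGraph.nCopies n H).RamseyProp M := by
    intro N M hNM hN R
    rcases hN (SimpleGraph.comap (Fin.castLE hNM) R) with h | h
    · exact Or.inl (containsCopy_lift _ _ (Fin.castLE hNM)
        (Fin.castLE_injective hNM) _ (fun a b hab => hab) h)
    · refine Or.inr (containsCopy_lift _ _ (Fin.castLE hNM)
        (Fin.castLE_injective hNM) _ ?_ h)
      intro a' b' hab
      rw [SimpleGraph.compl_adj] at hab ⊢
      exact ⟨fun hc => hab.1 (Fin.castLE_injective hNM hc), hab.2⟩
  have hSne : {N | (SimpleGraph.nCopies n H).RamseyProp N}.Nonempty := by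
    obtain ⟨N₁, hN₁⟩ := ramsey_aux (2 * (n * k)) (n * k) (n * k) (by omega)
    refine ⟨N₁, fun R => ?_⟩
    rcases hN₁ R Finset.univ (by simp) with ⟨S, -, hcl, hcard⟩ | ⟨S, -, hcl, hcard⟩
    · exact Or.inl (containsCopy_of_clique _ hcl (by simp [hcard]))
    · exact Or.inr (containsCopy_of_clique _ hcl (by simp [hcard]))
  have hlow : N₀ + 1 ≤ sInf {N | (SimpleGraph.nCopies n H).RamseyProp N} := by
    have hmem := Nat.sInf_mem hSne
    by_contra hlt
    push_neg at hlt
    exact hRamseyN₀ (hmono (by omega) hmem)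
  refine ⟨?_, ⟨Red', hno1, hno2⟩⟩
  have hram : (SimpleGraph.nCopies n H).ramsey =
      sInf {N | (SimpleGraph.nCopies n H).RamseyProp N} := rfl
  rw [hram]
  have h2k : H.indepNumber ≤ 2 * k := by omega
  have hm3 : 3 ≤ (2 * k - H.indepNumber) * n := by
    have h3' : 3 ≤ 2 * k - H.indepNumber := by omega
    calc 3 = 3 * 1 := by ring
      _ ≤ (2 * k - H.indepNumber) * n := Nat.mul_le_mul h3' hn
  have hmcast : (((2 * k - H.indepNumber) * n : ℕ) : ℤ) =
      (2 * (k : ℤ) - (H.indepNumber : ℤ)) * n := by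
    push_cast [Nat.cast_sub h2k]
    ring
  rw [← hmcast]
  omega
end

section
/- Let k ≥ 1 and let G be a graph on n ≥ 4^{k+9}·k³ vertices with independence number α(G) < k and minimum degree δ(G) ≥ (7/8)·n. Then for every set S ⊆ V(G) of k vertices and every set F ⊆ V(G) with S ⊆ F and |F| ≤ n/2, there exists a set L ⊆ V(G) \ F of size k² such that both the induced subgraph G[L] and the induced subgraph G[S ∪ L] admit perfect K_k-tilings (pairwise vertex-disjoint copies of K_k covering all vertices). -/
open Finset

lemma my_ramsey {V : Type*} [DecidableEq V] (G : SimpleGraph V) [DecidableRel G.Adj] :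
    ∀ N m j : ℕ, m + j ≤ N → ∀ U : Finset V,
      (∀ I : Finset V, I ⊆ U → (↑I : Set V).Pairwise (fun a b => ¬ G.Adj a b) → I.card ≠ j) →
      (m + j).choose m ≤ U.card → ∃ C, C ⊆ U ∧ G.IsNClique m C := by
  intro N
  induction N with
  | zero =>
    intro m j hmj U hind hcard
    have hm : m = 0 := by omega
    subst hm
    exact ⟨∅, empty_subset _, SimpleGraph.isNClique_empty.mpr rfl⟩
  | succ N ih =>
    intro m j hmj U hind hcard
    match m, j with
    | 0, j => exact ⟨∅, empty_subset _, SimpleGraph.isNClique_empty.mpr rfl⟩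
    | m+1, 0 =>
      exact (hind ∅ (empty_subset _) (by simp) (by simp)).elim
    | m+1, j+1 =>
      have h1 : (m + 1 + (j + 1)).choose (m + 1)
          = (m + j + 1).choose m + (m + j + 1).choose (m + 1) := by
        rw [show m + 1 + (j + 1) = (m + j + 1) + 1 by omega]
        exact Nat.choose_succ_succ' (m + j + 1) m
      have hA1 : 0 < (m + j + 1).choose m := Nat.choose_pos (by omega)
      have hB1 : 0 < (m + j + 1).choose (m + 1) := Nat.choose_pos (by omega)
      rw [h1] at hcard
      have hUne : U.Nonempty := card_pos.mp (by omega)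
      obtain ⟨v, hv⟩ := hUne
      set Nv := (U.erase v).filter (fun u => G.Adj v u) with hNvdef
      set Mv := (U.erase v).filter (fun u => ¬ G.Adj v u) with hMvdef
      have hsplit : Nv.card + Mv.card = U.card - 1 := by
        rw [hNvdef, hMvdef, card_filter_add_card_filter_not, card_erase_of_mem hv]
      have hNsub : Nv ⊆ U := (filter_subset _ _).trans (erase_subset _ _)
      have hMsub : Mv ⊆ U := (filter_subset _ _).trans (erase_subset _ _)
      by_cases hcase : (m + (j + 1)).choose m ≤ Nv.card
      · obtain ⟨C, hCsub, hC⟩ := ih m (j + 1) (by omega) Nv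
          (fun I hI => hind I (hI.trans hNsub)) hcase
        have hvC : v ∉ C := fun h => (notMem_erase v U) ((filter_subset _ _) (hCsub h))
        refine ⟨insert v C, insert_subset hv (hCsub.trans hNsub), ?_, ?_⟩
        · rw [coe_insert]
          exact hC.isClique.insert (fun b hb _ => (mem_filter.mp (hCsub hb)).2)
        · rw [card_insert_of_notMem hvC, hC.card_eq]
      · have hcase' : ¬ (m + j + 1).choose m ≤ Nv.card := hcase
        have hMcard : (m + 1 + j).choose (m + 1) ≤ Mv.card := by
          rw [show m + 1 + j = m + j + 1 by omega]
          omega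
        have hyp : ∀ I : Finset V, I ⊆ Mv →
            (↑I : Set V).Pairwise (fun a b => ¬ G.Adj a b) → I.card ≠ j := by
          intro I hI hpw hIc
          have hvI : v ∉ I := fun h => (notMem_erase v U) ((filter_subset _ _) (hI h))
          refine hind (insert v I) (insert_subset hv (hI.trans hMsub)) ?_ ?_
          · rw [coe_insert]
            refine (@Set.pairwise_insert_of_symm (α := V) (r := fun a b => ¬ G.Adj a b) (a := v) (s := ↑I) ⟨?_⟩).mpr ⟨hpw, ?_⟩
            · intro a b hab h; exact hab (G.adj_symm h)
            · intro b hb _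
              exact (mem_filter.mp (hI hb)).2
          · rw [card_insert_of_notMem hvI, hIc]
        obtain ⟨C, hCsub, hC⟩ := ih (m + 1) j (by omega) Mv hyp hMcard
        exact ⟨C, hCsub.trans hMsub, hC⟩

lemma my_indep_bound {V : Type*} [Fintype V] (G : SimpleGraph V) {k : ℕ}
    (hα : G.indepNumber < k) (I : Finset V)
    (hI : (↑I : Set V).Pairwise (fun a b => ¬ G.Adj a b)) : I.card ≠ k := by
  have hb : BddAbove {n | ∃ J : Finset V, G.IsIndep ↑J ∧ J.card = n} := by
    refine ⟨Fintype.card V, fun n hn => ?_⟩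
    obtain ⟨J, _, rfl⟩ := hn
    exact card_le_univ J
  have : I.card ≤ G.indepNumber := le_csSup hb ⟨I, hI, rfl⟩
  omega

lemma my_tiling_transfer {V : Type*} [Fintype V] [DecidableEq V] (G : SimpleGraph V)
    (k : ℕ) (L : Finset V) (T : Finset (Finset V)) (h1 : ∀ Q ∈ T, G.IsNClique k Q)
    (h2 : (T : Set (Finset V)).PairwiseDisjoint id) (h3 : T.biUnion id = L) :
    (G.induce (↑L : Set V)).HasPerfectKkTiling k := by
  classical
  set φ : Finset V → Finset (↑L : Set V) :=
    fun Q => Q.preimage Subtype.val Subtype.val_injective.injOn with hφ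
  have hmemφ : ∀ (Q : Finset V) (x : (↑L : Set V)), x ∈ φ Q ↔ ↑x ∈ Q := by
    intro Q x; simp [hφ, mem_preimage]
  refine ⟨T.image φ, ?_, ?_, ?_⟩
  · intro Q' hQ'
    obtain ⟨Q, hQ, rfl⟩ := mem_image.mp hQ'
    have hQL : Q ⊆ L := h3 ▸ subset_biUnion_of_mem id hQ
    constructor
    · intro a ha b hb hab
      exact (h1 Q hQ).isClique ((hmemφ Q a).mp ha) ((hmemφ Q b).mp hb)
        (fun h => hab (Subtype.ext h))
    · rw [← (h1 Q hQ).card_eq]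
      apply card_bij (fun (a : (↑L : Set V)) _ => (a : V))
      · intro a ha; exact (hmemφ Q a).mp ha
      · intro a _ b _ h; exact Subtype.ext h
      · intro b hb; exact ⟨⟨b, hQL hb⟩, (hmemφ Q _).mpr hb, rfl⟩
  · intro a ha b hb hab
    obtain ⟨Q₁, hQ₁, rfl⟩ := mem_image.mp (mem_coe.mp ha)
    obtain ⟨Q₂, hQ₂, rfl⟩ := mem_image.mp (mem_coe.mp hb)
    have hne : Q₁ ≠ Q₂ := fun h => hab (by rw [h])
    have hd : Disjoint Q₁ Q₂ := h2 hQ₁ hQ₂ hne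
    refine disjoint_left.mpr ?_
    intro x hx₁ hx₂
    exact (disjoint_left.mp hd ((hmemφ Q₁ x).mp hx₁)) ((hmemφ Q₂ x).mp hx₂)
  · apply eq_univ_iff_forall.mpr
    intro x
    have hx : (x : V) ∈ T.biUnion id := by rw [h3]; exact x.2
    obtain ⟨Q, hQ, hxQ⟩ := mem_biUnion.mp hx
    exact mem_biUnion.mpr ⟨φ Q, mem_image_of_mem φ hQ, (hmemφ Q x).mpr hxQ⟩
/-- local absorbers from the proof of Lemma 3.1. If `G` is a graph on
`n ≥ 4^(k+9)·k³` vertices with `α(G) < k` and `δ(G) ≥ (7/8)·n`, then for every `k`-set `S`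
and every `F ⊇ S` with `|F| ≤ n/2` there is an `L ⊆ V(G) \ F` of size `k²` such that both
`G[L]` and `G[S ∪ L]` admit perfect `K_k`-tilings. -/
theorem exists_local_absorber {V : Type*} [Fintype V] [DecidableEq V] (G : SimpleGraph V)
    [DecidableRel G.Adj] (k n : ℕ) (hk : 1 ≤ k) (hn : Fintype.card V = n)
    (hbig : 4 ^ (k + 9) * k ^ 3 ≤ n) (hα : G.indepNumber < k)
    (hδ : (7 / 8 : ℝ) * (n : ℝ) ≤ (G.minDegree : ℝ)) :
    ∀ S F : Finset V, S.card = k → S ⊆ F → 2 * F.card ≤ n →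
      ∃ L : Finset V, Disjoint L F ∧ L.card = k ^ 2 ∧
        (G.induce (↑L : Set V)).HasPerfectKkTiling k ∧
        (G.induce (↑(S ∪ L) : Set V)).HasPerfectKkTiling k := by
  obtain ⟨k', rfl⟩ : ∃ k', k = k' + 1 := ⟨k - 1, by omega⟩
  intro S F hS hSF hF
  have hαI : ∀ I : Finset V, (↑I : Set V).Pairwise (fun a b => ¬ G.Adj a b) → I.card ≠ k' + 1 :=
    fun I hI => my_indep_bound G hα I hI
  have hQn : 8 * 4 ^ (k' + 1) ≤ n := by
    calc 8 * 4 ^ (k' + 1) ≤ 4 ^ 2 * 4 ^ (k' + 1) := by norm_num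
      _ = 4 ^ (k' + 1 + 2) := by ring
      _ ≤ 4 ^ (k' + 1 + 9) := Nat.pow_le_pow_right (by norm_num) (by omega)
      _ ≤ 4 ^ (k' + 1 + 9) * (k' + 1) ^ 3 := Nat.le_mul_of_pos_right _ (by positivity)
      _ ≤ n := hbig
  have hK2n : 16 * ((k' + 1) * (k' + 1)) ≤ n := by
    calc 16 * ((k' + 1) * (k' + 1)) ≤ 4 ^ (k' + 1 + 9) * (k' + 1) ^ 3 := by
          have h16 : (16 : ℕ) ≤ 4 ^ (k' + 1 + 9) := by
            calc (16 : ℕ) = 4 ^ 2 := by norm_num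
              _ ≤ 4 ^ (k' + 1 + 9) := Nat.pow_le_pow_right (by norm_num) (by omega)
          have hkk : (k' + 1) * (k' + 1) ≤ (k' + 1) ^ 3 := by nlinarith
          exact Nat.mul_le_mul h16 hkk
      _ ≤ n := hbig
  have hδn : ∀ v : V, 8 * (n - G.degree v) ≤ n := by
    intro v
    have h1 : G.minDegree ≤ G.degree v := G.minDegree_le_degree v
    have h2 : (7 : ℝ) * n ≤ 8 * G.minDegree := by linarith
    have h3 : 7 * n ≤ 8 * G.minDegree := by exact_mod_cast h2
    omega
  have hNbr : ∀ (v : V) (A : Finset V),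
      A.card - (n - G.degree v) ≤ (A.filter (fun u => G.Adj v u)).card := by
    intro v A
    have h2 : A.filter (fun u => ¬ G.Adj v u) ⊆ univ \ G.neighborFinset v := by
      intro x hx
      rw [mem_sdiff, SimpleGraph.mem_neighborFinset]
      exact ⟨mem_univ x, (mem_filter.mp hx).2⟩
    have h1 : (A.filter (fun u => ¬ G.Adj v u)).card ≤ n - G.degree v := by
      calc (A.filter (fun u => ¬ G.Adj v u)).card ≤ (univ \ G.neighborFinset v).card :=
            card_le_card h2
        _ = n - G.degree v := by
            rw [card_sdiff_of_subset (subset_univ _), card_univ, hn, G.card_neighborFinset_eq_degree]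
    have h3 := card_filter_add_card_filter_not (s := A) (p := fun u => G.Adj v u)
    omega
  have hclique : ∀ (m : ℕ) (U : Finset V), m ≤ k' + 1 → 4 ^ (k' + 1) ≤ U.card →
      ∃ C, C ⊆ U ∧ G.IsNClique m C := by
    intro m U hm hU
    apply my_ramsey G (m + (k' + 1)) m (k' + 1) le_rfl U (fun I _ hI => hαI I hI)
    calc (m + (k' + 1)).choose m ≤ 2 ^ (m + (k' + 1)) := by
          calc (m + (k' + 1)).choose m
              ≤ ∑ i ∈ range (m + (k' + 1) + 1), (m + (k' + 1)).choose i :=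
                single_le_sum (fun i _ => Nat.zero_le _) (mem_range.mpr (by omega))
            _ = 2 ^ (m + (k' + 1)) := Nat.sum_range_choose _
      _ ≤ 2 ^ ((k' + 1) + (k' + 1)) := Nat.pow_le_pow_right (by norm_num) (by omega)
      _ = 4 ^ (k' + 1) := by
          rw [show (k' + 1) + (k' + 1) = 2 * (k' + 1) by omega, pow_mul]; norm_num
      _ ≤ U.card := hU
  have hUF : 4 ^ (k' + 1) ≤ (univ \ F).card := by
    have heq : (univ \ F).card = n - F.card := by
      rw [card_sdiff_of_subset (subset_univ F), card_univ, hn]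
    omega
  obtain ⟨C, hCsub, hC⟩ := hclique (k' + 1) (univ \ F) le_rfl hUF
  have hCcard : C.card = k' + 1 := hC.card_eq
  have hCF : Disjoint C F := disjoint_left.mpr (fun x hx => (mem_sdiff.mp (hCsub hx)).2)
  have e : (↥(S : Finset V)) ≃ ↥C := Fintype.equivOfCardEq (by
    rw [Fintype.card_coe, Fintype.card_coe, hS, hCcard])
  set c : V → V := fun v => if h : v ∈ S then ↑(e ⟨v, h⟩) else v with hcdef
  have hcC : ∀ s ∈ S, c s ∈ C := by
    intro s hs
    simp only [hcdef, dif_pos hs]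
    exact (e ⟨s, hs⟩).2
  have hcInj : ∀ s ∈ S, ∀ t ∈ S, c s = c t → s = t := by
    intro s hs t ht h
    simp only [hcdef, dif_pos hs, dif_pos ht] at h
    have h2 : (⟨s, hs⟩ : ↥(S : Finset V)) = ⟨t, ht⟩ := e.injective (Subtype.ext h)
    exact congrArg Subtype.val h2
  have key : ∀ T : Finset V, T ⊆ S → ∃ g : V → Finset V,
      (∀ s ∈ T, G.IsNClique k' (g s)) ∧
      (∀ s ∈ T, ∀ v ∈ g s, G.Adj s v ∧ G.Adj (c s) v) ∧
      (∀ s ∈ T, Disjoint (g s) (F ∪ C)) ∧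
      (∀ s ∈ T, ∀ t ∈ T, s ≠ t → Disjoint (g s) (g t)) := by
    intro T
    induction T using Finset.induction_on with
    | empty => exact fun _ => ⟨fun _ => ∅, by simp, by simp, by simp, by simp⟩
    | @insert a T haT ih =>
      intro hsub
      obtain ⟨g, hg1, hg2, hg3, hg4⟩ := ih (fun x hx => hsub (mem_insert_of_mem hx))
      have haS : a ∈ S := hsub (mem_insert_self a T)
      have hTS : T ⊆ S := fun x hx => hsub (mem_insert_of_mem hx)
      set X := T.biUnion g with hXdef
      set B := (univ \ (F ∪ C)) \ X with hBdef
      set avail := (B.filter (fun u => G.Adj a u)).filter (fun u => G.Adj (c a) u) with havdef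
      have hav : 4 ^ (k' + 1) ≤ avail.card := by
        have hXcard : X.card ≤ (k' + 1) * k' := by
          calc X.card ≤ ∑ s ∈ T, (g s).card := card_biUnion_le
            _ ≤ T.card * k' := by
                have := sum_le_card_nsmul T (fun s => (g s).card) k'
                  (fun s hs => le_of_eq (hg1 s hs).card_eq)
                simpa using this
            _ ≤ (k' + 1) * k' := Nat.mul_le_mul_right _ (by
                have := card_le_card hTS
                omega)
        have hFC : (F ∪ C).card ≤ F.card + (k' + 1) := by
          calc (F ∪ C).card ≤ F.card + C.card := card_union_le F C
            _ = F.card + (k' + 1) := by rw [hCcard]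
        have h1 : (univ \ (F ∪ C)).card = n - (F ∪ C).card := by
          rw [card_sdiff_of_subset (subset_univ _), card_univ, hn]
        have h2 : (univ \ (F ∪ C)).card - X.card ≤ B.card := le_card_sdiff X _
        have h3 := hNbr a B
        have h4 : (B.filter (fun u => G.Adj a u)).card - (n - G.degree (c a)) ≤ avail.card :=
          hNbr (c a) (B.filter (fun u => G.Adj a u))
        have h5 := hδn a
        have h6 := hδn (c a)
        have h8 := hQn
        have h16 := hK2n
        have hKeq : (k' + 1) + (k' + 1) * k' = (k' + 1) * (k' + 1) := by ring
        omega
      obtain ⟨D, hDsub, hD⟩ := hclique k' avail (by omega) hav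
      have hDprop : ∀ v ∈ D, G.Adj a v ∧ G.Adj (c a) v ∧ v ∉ F ∪ C ∧ v ∉ X := by
        intro v hv
        have h2 := mem_filter.mp (hDsub hv)
        have h3 := mem_filter.mp h2.1
        have h4 := mem_sdiff.mp h3.1
        have h5 := mem_sdiff.mp h4.1
        exact ⟨h3.2, h2.2, h5.2, h4.2⟩
      refine ⟨Function.update g a D, ?_, ?_, ?_, ?_⟩
      · intro s hs
        rcases mem_insert.mp hs with rfl | hsT
        · rw [Function.update_self]; exact hD
        · rw [Function.update_of_ne (by rintro rfl; exact haT hsT)]; exact hg1 s hsT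
      · intro s hs v hv
        rcases mem_insert.mp hs with rfl | hsT
        · rw [Function.update_self] at hv
          exact ⟨(hDprop v hv).1, (hDprop v hv).2.1⟩
        · rw [Function.update_of_ne (by rintro rfl; exact haT hsT)] at hv
          exact hg2 s hsT v hv
      · intro s hs
        rcases mem_insert.mp hs with rfl | hsT
        · rw [Function.update_self]
          exact disjoint_left.mpr (fun v hv => (hDprop v hv).2.2.1)
        · rw [Function.update_of_ne (by rintro rfl; exact haT hsT)]; exact hg3 s hsT
      · intro s hs t ht hst
        have hDg : ∀ t ∈ T, Disjoint D (g t) := by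
          intro t htT
          exact disjoint_left.mpr (fun v hv hvg =>
            (hDprop v hv).2.2.2 (mem_biUnion.mpr ⟨t, htT, hvg⟩))
        rcases mem_insert.mp hs with rfl | hsT <;> rcases mem_insert.mp ht with h | htT
        · exact absurd h.symm hst
        · rw [Function.update_self, Function.update_of_ne (by rintro rfl; exact haT htT)]
          exact hDg t htT
        · subst h
          rw [Function.update_self, Function.update_of_ne (by rintro rfl; exact haT hsT)]
          exact (hDg s hsT).symm
        · rw [Function.update_of_ne (by rintro rfl; exact haT hsT),
             Function.update_of_ne (by rintro rfl; exact haT htT)]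
          exact hg4 s hsT t htT hst
  obtain ⟨g, hg1, hg2, hg3, hg4⟩ := key S Subset.rfl
  have hgcard : ∀ s ∈ S, (g s).card = k' := fun s hs => (hg1 s hs).card_eq
  have hgF : ∀ s ∈ S, Disjoint (g s) F := fun s hs => (disjoint_union_right.mp (hg3 s hs)).1
  have hgC : ∀ s ∈ S, Disjoint (g s) C := fun s hs => (disjoint_union_right.mp (hg3 s hs)).2
  set L := C ∪ S.biUnion g with hLdef
  have hCbi : Disjoint C (S.biUnion g) := by
    rw [disjoint_right]
    intro x hx hxC
    obtain ⟨s, hs, hxg⟩ := mem_biUnion.mp hx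
    exact disjoint_left.mp (hgC s hs) hxg hxC
  have hbiF : Disjoint (S.biUnion g) F := by
    rw [disjoint_left]
    intro x hx
    obtain ⟨s, hs, hxg⟩ := mem_biUnion.mp hx
    exact disjoint_left.mp (hgF s hs) hxg
  have hLF : Disjoint L F := by rw [hLdef]; exact disjoint_union_left.mpr ⟨hCF, hbiF⟩
  have hbicard : (S.biUnion g).card = (k' + 1) * k' := by
    rw [card_biUnion (fun x hx y hy hxy => hg4 x hx y hy hxy)]
    rw [sum_congr rfl hgcard, sum_const, hS, smul_eq_mul]
  have hLcard : L.card = (k' + 1) ^ 2 := by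
    rw [hLdef, card_union_of_disjoint hCbi, hCcard, hbicard]; ring
  have himg : S.attach.image (fun s : {x // x ∈ S} => c ↑s) = C := by
    apply eq_of_subset_of_card_le
    · intro x hx
      obtain ⟨s, _, rfl⟩ := mem_image.mp hx
      exact hcC ↑s s.2
    · have hinj : (S.attach.image (fun s : {x // x ∈ S} => c ↑s)).card = S.attach.card :=
        card_image_of_injOn (by
          intro x _ y _ h
          exact Subtype.ext (hcInj ↑x x.2 ↑y y.2 h))
      rw [hinj, card_attach, hS, hCcard]
  have hsgs : ∀ s ∈ S, s ∉ g s := fun s hs h => disjoint_left.mp (hgF s hs) h (hSF hs)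
  have hcgs : ∀ s ∈ S, ∀ t ∈ S, c s ∉ g t := fun s hs t ht h =>
    disjoint_left.mp (hgC t ht) h (hcC s hs)
  have ht1 : (G.induce (↑L : Set V)).HasPerfectKkTiling (k' + 1) := by
    apply my_tiling_transfer G (k' + 1) L (S.attach.image (fun s : {x // x ∈ S} => insert (c ↑s) (g ↑s)))
    · intro Q hQ
      obtain ⟨s, _, rfl⟩ := mem_image.mp hQ
      constructor
      · rw [coe_insert]
        exact (hg1 ↑s s.2).isClique.insert (fun b hb _ => (hg2 ↑s s.2 b hb).2)
      · rw [card_insert_of_notMem (hcgs ↑s s.2 ↑s s.2), hgcard ↑s s.2]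
    · intro Q₁ hQ₁ Q₂ hQ₂ hne
      obtain ⟨s₁, _, rfl⟩ := mem_image.mp (mem_coe.mp hQ₁)
      obtain ⟨s₂, _, rfl⟩ := mem_image.mp (mem_coe.mp hQ₂)
      have hs12 : (↑s₁ : V) ≠ ↑s₂ := by
        intro h
        exact hne (by rw [show s₁ = s₂ from Subtype.ext h])
      simp only [Function.onFun, id]
      rw [disjoint_left]
      intro x hx₁ hx₂
      rcases mem_insert.mp hx₁ with rfl | hx₁g <;> rcases mem_insert.mp hx₂ with h | hx₂g
      · exact hs12 (hcInj ↑s₁ s₁.2 ↑s₂ s₂.2 h)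
      · exact hcgs ↑s₁ s₁.2 ↑s₂ s₂.2 hx₂g
      · exact hcgs ↑s₂ s₂.2 ↑s₁ s₁.2 (h ▸ hx₁g)
      · exact disjoint_left.mp (hg4 ↑s₁ s₁.2 ↑s₂ s₂.2 hs12) hx₁g hx₂g
    · apply subset_antisymm
      · intro x hx
        obtain ⟨Q, hQ, hxQ⟩ := mem_biUnion.mp hx
        obtain ⟨s, _, rfl⟩ := mem_image.mp hQ
        rcases mem_insert.mp hxQ with rfl | hxg
        · exact mem_union_left _ (hcC ↑s s.2)
        · exact mem_union_right _ (mem_biUnion.mpr ⟨↑s, s.2, hxg⟩)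
      · intro x hx
        rcases mem_union.mp hx with hxC | hxb
        · rw [← himg] at hxC
          obtain ⟨s, hs, rfl⟩ := mem_image.mp hxC
          exact mem_biUnion.mpr
            ⟨insert (c ↑s) (g ↑s), mem_image_of_mem _ hs, mem_insert_self _ _⟩
        · obtain ⟨s, hs, hxg⟩ := mem_biUnion.mp hxb
          exact mem_biUnion.mpr ⟨insert (c s) (g s),
            mem_image_of_mem _ (mem_attach S ⟨s, hs⟩), mem_insert_of_mem hxg⟩
  have ht2 : (G.induce (↑(S ∪ L) : Set V)).HasPerfectKkTiling (k' + 1) := by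
    apply my_tiling_transfer G (k' + 1) (S ∪ L)
      (insert C (S.attach.image (fun s : {x // x ∈ S} => insert (↑s : V) (g ↑s))))
    · intro Q hQ
      rcases mem_insert.mp hQ with rfl | hQ'
      · exact hC
      · obtain ⟨s, _, rfl⟩ := mem_image.mp hQ'
        constructor
        · rw [coe_insert]
          exact (hg1 ↑s s.2).isClique.insert (fun b hb _ => (hg2 ↑s s.2 b hb).1)
        · rw [card_insert_of_notMem (hsgs ↑s s.2), hgcard ↑s s.2]
    · have hCins : ∀ s ∈ S, Disjoint C (insert s (g s)) := by
        intro s hs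
        rw [disjoint_right]
        intro x hx hxC
        rcases mem_insert.mp hx with rfl | hxg
        · exact disjoint_left.mp hCF hxC (hSF hs)
        · exact disjoint_left.mp (hgC s hs) hxg hxC
      have hinsins : ∀ s ∈ S, ∀ t ∈ S, s ≠ t →
          Disjoint (insert s (g s)) (insert t (g t)) := by
        intro s hs t ht hst
        rw [disjoint_left]
        intro x hx₁ hx₂
        rcases mem_insert.mp hx₁ with rfl | hx₁g <;> rcases mem_insert.mp hx₂ with h | hx₂g
        · exact hst h
        · exact disjoint_left.mp (hgF t ht) hx₂g (hSF hs)
        · exact disjoint_left.mp (hgF s hs) hx₁g (h ▸ hSF ht)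
        · exact disjoint_left.mp (hg4 s hs t ht hst) hx₁g hx₂g
      intro Q₁ hQ₁ Q₂ hQ₂ hne
      simp only [Function.onFun, id]
      rcases mem_insert.mp (mem_coe.mp hQ₁) with rfl | hQ₁'
      · rcases mem_insert.mp (mem_coe.mp hQ₂) with h | hQ₂'
        · exact absurd h.symm hne
        · obtain ⟨s, _, rfl⟩ := mem_image.mp hQ₂'
          exact hCins ↑s s.2
      · rcases mem_insert.mp (mem_coe.mp hQ₂) with h | hQ₂'
        · obtain ⟨s, _, rfl⟩ := mem_image.mp hQ₁'
          subst h
          exact (hCins ↑s s.2).symm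
        · obtain ⟨s₁, _, rfl⟩ := mem_image.mp hQ₁'
          obtain ⟨s₂, _, rfl⟩ := mem_image.mp hQ₂'
          have hs12 : (↑s₁ : V) ≠ ↑s₂ := by
            intro h
            exact hne (by rw [show s₁ = s₂ from Subtype.ext h])
          exact hinsins ↑s₁ s₁.2 ↑s₂ s₂.2 hs12
    · apply subset_antisymm
      · intro x hx
        obtain ⟨Q, hQ, hxQ⟩ := mem_biUnion.mp hx
        rcases mem_insert.mp hQ with rfl | hQ'
        · exact mem_union_right _ (mem_union_left _ hxQ)
        · obtain ⟨s, _, rfl⟩ := mem_image.mp hQ'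
          rcases mem_insert.mp hxQ with rfl | hxg
          · exact mem_union_left _ s.2
          · exact mem_union_right _ (mem_union_right _ (mem_biUnion.mpr ⟨↑s, s.2, hxg⟩))
      · intro x hx
        rcases mem_union.mp hx with hxS | hxL
        · exact mem_biUnion.mpr ⟨insert x (g x),
            mem_insert_of_mem (mem_image_of_mem _ (mem_attach S ⟨x, hxS⟩)),
            mem_insert_self _ _⟩
        · rcases mem_union.mp hxL with hxC | hxb
          · exact mem_biUnion.mpr ⟨C, mem_insert_self _ _, hxC⟩
          · obtain ⟨s, hs, hxg⟩ := mem_biUnion.mp hxb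
            exact mem_biUnion.mpr ⟨insert s (g s),
              mem_insert_of_mem (mem_image_of_mem _ (mem_attach S ⟨s, hs⟩)),
              mem_insert_of_mem hxg⟩
  exact ⟨L, hLF, hLcard, ht1, ht2⟩
end

section
/- Let H be a graph on k vertices with at least one edge and independence number α = α(H). Consider a 2-coloured complete graph containing disjoint vertex sets R and B, each of size at least 2·2^{5k}, such that R contains no blue copy of H and B contains no red copy of H. Let v be a vertex outside R ∪ B, let c₁, c₂ ∈ {red, blue}, and suppose v has at least 2^{5k} neighbours in R joined to v by edges of colour c₁ and at least 2^{5k} neighbours in B joined to v by edges of colour c₂. If it is not the case that c₁ is blue and c₂ is red, then there exists an H-tie containing v whose remaining vertices lie in R ∪ B. -/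
open Finset

lemma tie_indep_exists {k : ℕ} (H : SimpleGraph (Fin k)) (hedge : ∃ a b, H.Adj a b) :
    ∃ I : Finset (Fin k), (∀ a ∈ I, ∀ b ∈ I, ¬ H.Adj a b) ∧ I.card = H.indepNumber ∧
      1 ≤ H.indepNumber ∧ H.indepNumber + 1 ≤ k := by
  classical
  obtain ⟨a, b, hab⟩ := hedge
  have hbdd : BddAbove {n | ∃ I : Finset (Fin k), H.IsIndep ↑I ∧ I.card = n} := by
    refine ⟨k, fun n hn => ?_⟩
    obtain ⟨I, _, rfl⟩ := hn
    simpa using Finset.card_le_univ I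
  have hne : {n | ∃ I : Finset (Fin k), H.IsIndep ↑I ∧ I.card = n}.Nonempty :=
    ⟨0, ∅, by simp [SimpleGraph.IsIndep], by simp⟩
  have hmem := Nat.sSup_mem hne hbdd
  obtain ⟨I, hIind, hIcard⟩ := hmem
  have hIind' : ∀ x ∈ I, ∀ y ∈ I, ¬ H.Adj x y := by
    intro x hx y hy
    by_cases hxy : x = y
    · subst hxy; exact H.loopless.irrefl x
    · exact hIind (Finset.mem_coe.2 hx) (Finset.mem_coe.2 hy) hxy
  have h1 : 1 ≤ H.indepNumber := by
    apply le_csSup hbdd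
    exact ⟨{a}, by simp [SimpleGraph.IsIndep], by simp⟩
  have h2 : H.indepNumber + 1 ≤ k := by
    have hle : I.card ≤ k := by simpa using Finset.card_le_univ I
    rcases eq_or_lt_of_le hle with heq | hlt
    · exfalso
      have : I = Finset.univ := Finset.eq_univ_of_card I (by simpa using heq)
      exact hIind' a (this ▸ Finset.mem_univ a) b (this ▸ Finset.mem_univ b) hab
    · simp only [SimpleGraph.indepNumber]
      omega
  exact ⟨I, hIind', hIcard, h1, h2⟩




lemma tie_copyIn_mono {W V : Type*} {H : SimpleGraph W} {G : SimpleGraph V} {A B : Set V}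
    (hAB : A ⊆ B) (h : H.CopyIn G A) : H.CopyIn G B := by
  obtain ⟨f, hinj, hmem, hadj⟩ := h
  exact ⟨f, hinj, fun a => hAB (hmem a), hadj⟩

lemma tie_copyIn_split {V : Type*} [DecidableEq V] {k : ℕ} (H : SimpleGraph (Fin k))
    (G : SimpleGraph V) (I : Finset (Fin k))
    (hI : ∀ a ∈ I, ∀ b ∈ I, ¬ H.Adj a b)
    (T X : Finset V) (hTX : Disjoint T X)
    (hT : I.card ≤ T.card) (hX : k - I.card ≤ X.card)
    (hXc : ∀ a ∈ X, ∀ b ∈ X, a ≠ b → G.Adj a b)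
    (hcross : ∀ a ∈ T, ∀ b ∈ X, G.Adj a b) :
    H.CopyIn G (↑T ∪ ↑X) := by
  classical
  have hcard1 : Fintype.card {x // x ∈ I} ≤ Fintype.card {x // x ∈ T} := by
    simpa [Fintype.card_coe] using hT
  have hcard2 : Fintype.card {x // x ∈ Iᶜ} ≤ Fintype.card {x // x ∈ X} := by
    simpa [Fintype.card_coe, Finset.card_compl] using hX
  obtain ⟨e₁⟩ := Function.Embedding.nonempty_of_card_le hcard1
  obtain ⟨e₂⟩ := Function.Embedding.nonempty_of_card_le hcard2
  refine ⟨fun a => if h : a ∈ I then (e₁ ⟨a, h⟩ : V) else (e₂ ⟨a, Finset.mem_compl.2 h⟩ : V),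
    ?_, ?_, ?_⟩
  · intro a b hab
    by_cases ha : a ∈ I <;> by_cases hb : b ∈ I
    · simp only [dif_pos ha, dif_pos hb] at hab
      simpa using congrArg Subtype.val (e₁.injective (Subtype.ext hab))
    · exfalso
      simp only [dif_pos ha, dif_neg hb] at hab
      have h1 := (e₁ ⟨a, ha⟩).2
      rw [hab] at h1
      exact Finset.disjoint_left.1 hTX h1 (e₂ ⟨b, Finset.mem_compl.2 hb⟩).2
    · exfalso
      simp only [dif_neg ha, dif_pos hb] at hab
      have h1 := (e₁ ⟨b, hb⟩).2
      rw [← hab] at h1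
      exact Finset.disjoint_left.1 hTX h1 (e₂ ⟨a, Finset.mem_compl.2 ha⟩).2
    · simp only [dif_neg ha, dif_neg hb] at hab
      have := e₂.injective (Subtype.ext hab)
      simpa using congrArg Subtype.val this
  · intro a
    by_cases ha : a ∈ I
    · simp only [dif_pos ha]
      exact Set.mem_union_left _ (e₁ ⟨a, ha⟩).2
    · simp only [dif_neg ha]
      exact Set.mem_union_right _ (e₂ ⟨a, Finset.mem_compl.2 ha⟩).2
  · intro a b hab
    by_cases ha : a ∈ I <;> by_cases hb : b ∈ I
    · exact absurd hab (hI a ha b hb)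
    · simp only [dif_pos ha, dif_neg hb]
      exact hcross _ (e₁ ⟨a, ha⟩).2 _ (e₂ ⟨b, Finset.mem_compl.2 hb⟩).2
    · simp only [dif_neg ha, dif_pos hb]
      exact (hcross _ (e₁ ⟨b, hb⟩).2 _ (e₂ ⟨a, Finset.mem_compl.2 ha⟩).2).symm
    · simp only [dif_neg ha, dif_neg hb]
      refine hXc _ (e₂ ⟨a, Finset.mem_compl.2 ha⟩).2 _ (e₂ ⟨b, Finset.mem_compl.2 hb⟩).2 ?_
      intro h
      exact hab.ne (by simpa using congrArg Subtype.val (e₂.injective (Subtype.ext h)))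


lemma tie_ramsey {V : Type*} [DecidableEq V] (G : SimpleGraph V) :
    ∀ n s t (A : Finset V), s + t ≤ n → 2 ^ (s + t) ≤ A.card →
    (∃ C ⊆ A, C.card = s ∧ ∀ a ∈ C, ∀ b ∈ C, a ≠ b → G.Adj a b) ∨
    (∃ C ⊆ A, C.card = t ∧ ∀ a ∈ C, ∀ b ∈ C, a ≠ b → ¬ G.Adj a b) := by
  classical
  intro n
  induction n with
  | zero =>
    intro s t A hst _
    have hs : s = 0 := by omega
    exact Or.inl ⟨∅, Finset.empty_subset _, by simp [hs], by simp⟩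
  | succ n ih =>
    intro s t A hst hA
    rcases Nat.eq_zero_or_pos s with hs | hs
    · exact Or.inl ⟨∅, Finset.empty_subset _, by simp [hs], by simp⟩
    rcases Nat.eq_zero_or_pos t with ht | ht
    · exact Or.inr ⟨∅, Finset.empty_subset _, by simp [ht], by simp⟩
    have hs' : 1 ≤ s := hs
    have ht' : 1 ≤ t := ht
    obtain ⟨s, rfl⟩ := Nat.exists_eq_add_of_le hs'
    obtain ⟨t, rfl⟩ := Nat.exists_eq_add_of_le ht'
    have hA0 : A.Nonempty :=
      Finset.card_pos.1 (lt_of_lt_of_le (Nat.pow_pos (by norm_num)) hA)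
    obtain ⟨x, hx⟩ := hA0
    set Nr := (A.erase x).filter (fun y => G.Adj x y) with hNr
    set Nb := (A.erase x).filter (fun y => ¬ G.Adj x y) with hNb
    have hsum : Nr.card + Nb.card = A.card - 1 := by
      rw [hNr, hNb, Finset.card_filter_add_card_filter_not]
      simp [Finset.card_erase_of_mem hx]
    have hbig : 2 ^ (s + (1 + t)) ≤ Nr.card ∨ 2 ^ ((1 + s) + t) ≤ Nb.card := by
      by_contra hcon
      push_neg at hcon
      have h1 : 2 ^ (1 + s + (1 + t)) = 2 ^ (s + (1 + t)) + 2 ^ ((1 + s) + t) := by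
        rw [show 1 + s + (1 + t) = (s + (1 + t)) + 1 by ring, pow_succ,
          show (1 + s) + t = s + (1 + t) by ring]
        ring
      omega
    rcases hbig with hbig | hbig
    · rcases ih s (1 + t) Nr (by omega) hbig with ⟨C, hCsub, hCcard, hCadj⟩ | ⟨C, hCsub, hCcard, hCadj⟩
      · refine Or.inl ⟨insert x C, ?_, ?_, ?_⟩
        · intro y hy
          rcases Finset.mem_insert.1 hy with rfl | hy
          · exact hx
          · exact Finset.erase_subset _ _ (Finset.filter_subset _ _ (hCsub hy))
        · have hxC : x ∉ C := fun h =>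
            (Finset.notMem_erase x A) (Finset.filter_subset _ _ (hCsub h))
          rw [Finset.card_insert_of_notMem hxC, hCcard]; ring
        · intro a ha b hb hab
          have hC' : ∀ c ∈ C, G.Adj x c := fun c hc => (Finset.mem_filter.1 (hCsub hc)).2
          rcases Finset.mem_insert.1 ha with ha' | ha' <;>
            rcases Finset.mem_insert.1 hb with hb' | hb'
          · exact absurd (ha'.trans hb'.symm) hab
          · subst ha'; exact hC' b hb'
          · subst hb'; exact (hC' a ha').symm
          · exact hCadj a ha' b hb' hab
      · exact Or.inr ⟨C, fun y hy =>
          Finset.erase_subset _ _ (Finset.filter_subset _ _ (hCsub hy)), hCcard, hCadj⟩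
    · rcases ih (1 + s) t Nb (by omega) hbig with ⟨C, hCsub, hCcard, hCadj⟩ | ⟨C, hCsub, hCcard, hCadj⟩
      · exact Or.inl ⟨C, fun y hy =>
          Finset.erase_subset _ _ (Finset.filter_subset _ _ (hCsub hy)), hCcard, hCadj⟩
      · refine Or.inr ⟨insert x C, ?_, ?_, ?_⟩
        · intro y hy
          rcases Finset.mem_insert.1 hy with rfl | hy
          · exact hx
          · exact Finset.erase_subset _ _ (Finset.filter_subset _ _ (hCsub hy))
        · have hxC : x ∉ C := fun h =>
            (Finset.notMem_erase x A) (Finset.filter_subset _ _ (hCsub h))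
          rw [Finset.card_insert_of_notMem hxC, hCcard]; ring
        · intro a ha b hb hab
          have hC' : ∀ c ∈ C, ¬ G.Adj x c := fun c hc => (Finset.mem_filter.1 (hCsub hc)).2
          rcases Finset.mem_insert.1 ha with ha' | ha' <;>
            rcases Finset.mem_insert.1 hb with hb' | hb'
          · exact absurd (ha'.trans hb'.symm) hab
          · subst ha'; exact hC' b hb'
          · subst hb'; exact fun h => hC' a ha' h.symm
          · exact hCadj a ha' b hb' hab

lemma tie_halving {V : Type*} [DecidableEq V] (G : SimpleGraph V) (P : Finset V) :
    ∀ A : Finset V,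
    ∃ Wr Wb M : Finset V, Wr ∪ Wb = P ∧ Disjoint Wr Wb ∧ M ⊆ A ∧
      A.card ≤ 2 ^ P.card * M.card ∧
      (∀ w ∈ Wr, ∀ m ∈ M, G.Adj w m) ∧ (∀ w ∈ Wb, ∀ m ∈ M, ¬ G.Adj w m) := by
  classical
  induction P using Finset.induction_on with
  | empty =>
    intro A
    exact ⟨∅, ∅, A, by simp, by simp, le_refl _, by simp, by simp, by simp⟩
  | @insert x P hxP ih =>
    intro A
    obtain ⟨Wr, Wb, M, hunion, hdisjW, hMA, hcard, hred, hblue⟩ := ih A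
    set Mr := M.filter (fun y => G.Adj x y) with hMr
    set Mb := M.filter (fun y => ¬ G.Adj x y) with hMb
    have hsum : Mr.card + Mb.card = M.card := by
      rw [hMr, hMb]
      exact Finset.card_filter_add_card_filter_not (p := fun y => G.Adj x y)
    have hxWr : x ∉ Wr := fun h => hxP (hunion ▸ Finset.mem_union_left _ h)
    have hxWb : x ∉ Wb := fun h => hxP (hunion ▸ Finset.mem_union_right _ h)
    have hcardP : (insert x P).card = P.card + 1 := Finset.card_insert_of_notMem hxP
    rcases le_total Mb.card Mr.card with hmaj | hmaj
    · refine ⟨insert x Wr, Wb, Mr, ?_, ?_, ?_, ?_, ?_, ?_⟩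
      · rw [Finset.insert_union, hunion]
      · exact Finset.disjoint_insert_left.2 ⟨hxWb, hdisjW⟩
      · exact (Finset.filter_subset _ _).trans hMA
      · calc A.card ≤ 2 ^ P.card * M.card := hcard
          _ ≤ 2 ^ P.card * (2 * Mr.card) := by
              apply Nat.mul_le_mul_left; omega
          _ = 2 ^ (insert x P).card * Mr.card := by rw [hcardP, pow_succ]; ring
      · intro w hw m hm
        rcases Finset.mem_insert.1 hw with rfl | hw
        · exact (Finset.mem_filter.1 hm).2
        · exact hred w hw m (Finset.filter_subset _ _ hm)
      · intro w hw m hm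
        exact hblue w hw m (Finset.filter_subset _ _ hm)
    · refine ⟨Wr, insert x Wb, Mb, ?_, ?_, ?_, ?_, ?_, ?_⟩
      · rw [Finset.union_insert, hunion]
      · exact Finset.disjoint_insert_right.2 ⟨hxWr, hdisjW⟩
      · exact (Finset.filter_subset _ _).trans hMA
      · calc A.card ≤ 2 ^ P.card * M.card := hcard
          _ ≤ 2 ^ P.card * (2 * Mb.card) := by
              apply Nat.mul_le_mul_left; omega
          _ = 2 ^ (insert x P).card * Mb.card := by rw [hcardP, pow_succ]; ring
      · intro w hw m hm
        exact hred w hw m (Finset.filter_subset _ _ hm)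
      · intro w hw m hm
        rcases Finset.mem_insert.1 hw with rfl | hw
        · exact (Finset.mem_filter.1 hm).2
        · exact hblue w hw m (Finset.filter_subset _ _ hm)


lemma tie_main {V : Type*} [Fintype V] [DecidableEq V] (k : ℕ)
    (H : SimpleGraph (Fin k)) (hedge : ∃ a b, H.Adj a b)
    (G : SimpleGraph V) (R B : Finset V) (hdisj : Disjoint R B)
    (hRblue : ¬ H.CopyIn Gᶜ ↑R) (hBred : ¬ H.CopyIn G ↑B)
    (v : V) (hv : v ∉ R ∪ B) (c₂ : Bool)
    (N₁ N₂ : Finset V) (hN₁R : N₁ ⊆ R) (hN₂B : N₂ ⊆ B)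
    (hN₁adj : ∀ u ∈ N₁, G.Adj v u)
    (hN₂adj : ∀ u ∈ N₂, if c₂ = true then G.Adj v u else ¬ G.Adj v u)
    (h1 : 2 ^ (5 * k) ≤ N₁.card) (h2 : 2 ^ (5 * k) ≤ N₂.card) :
    ∃ S : Finset V, S.card = 2 * k - H.indepNumber ∧ H.CopyIn G ↑S ∧ H.CopyIn Gᶜ ↑S ∧
      v ∈ S ∧ ∀ u ∈ S, u ≠ v → u ∈ R ∪ B := by
  classical
  obtain ⟨I, hIind, hIcard, hα1, hαk⟩ := tie_indep_exists H hedge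
  set α := H.indepNumber with hα
  have hvR : v ∉ R := fun h => hv (Finset.mem_union_left _ h)
  have hvB : v ∉ B := fun h => hv (Finset.mem_union_right _ h)
  have copy_clique : ∀ (G' : SimpleGraph V) (C : Finset V), k ≤ C.card →
      (∀ a ∈ C, ∀ b ∈ C, a ≠ b → G'.Adj a b) → H.CopyIn G' ↑C := by
    intro G' C hC hadj
    have := tie_copyIn_split H G' ∅ (by simp) ∅ C (by simp) (by simp)
      (by simpa using hC) hadj (by simp)
    simpa using this
  have noblue : ∀ C : Finset V, C ⊆ R → C.card = k →
      (∀ a ∈ C, ∀ b ∈ C, a ≠ b → ¬ G.Adj a b) → False := by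
    intro C hCR hCk hC
    apply hRblue
    apply tie_copyIn_mono (Finset.coe_subset.2 hCR)
    exact copy_clique Gᶜ C hCk.ge
      (fun a ha b hb hab => (G.compl_adj a b).2 ⟨hab, hC a ha b hb hab⟩)
  have nored : ∀ C : Finset V, C ⊆ B → C.card = k →
      (∀ a ∈ C, ∀ b ∈ C, a ≠ b → G.Adj a b) → False :=
    fun C hCB hCk hC =>
      hBred (tie_copyIn_mono (Finset.coe_subset.2 hCB) (copy_clique G C hCk.ge hC))
  have redclique : ∀ (m : ℕ) (A : Finset V), A ⊆ N₁ → 2 ^ (m + k) ≤ A.card →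
      ∃ C ⊆ A, C.card = m ∧ ∀ a ∈ C, ∀ b ∈ C, a ≠ b → G.Adj a b := by
    intro m A hAN hA
    rcases tie_ramsey G (m + k) m k A le_rfl hA with h | ⟨C, hCA, hCk, hC⟩
    · exact h
    · exact (noblue C (hCA.trans (hAN.trans hN₁R)) hCk hC).elim
  -- blue clique of size 2k in N₂
  obtain ⟨Y', hY'sub, hY'card, hY'blue⟩ :
      ∃ C ⊆ N₂, C.card = 2 * k ∧ ∀ a ∈ C, ∀ b ∈ C, a ≠ b → ¬ G.Adj a b := by
    rcases tie_ramsey G (k + 2 * k) k (2 * k) N₂ le_rfl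
      (le_trans (Nat.pow_le_pow_right (by norm_num) (by omega)) h2) with
      ⟨C, hCA, hCk, hC⟩ | h
    · exact (nored C (hCA.trans hN₂B) hCk hC).elim
    · exact h
  obtain ⟨Wr, Wb, M, hWunion, hWdisj, hMN₁, hMcard, hWred, hWblue⟩ := tie_halving G Y' N₁
  have hWrY' : Wr ⊆ Y' := hWunion ▸ Finset.subset_union_left
  have hWbY' : Wb ⊆ Y' := hWunion ▸ Finset.subset_union_right
  have hM3k : 2 ^ (3 * k) ≤ M.card := by
    have h5 : 2 ^ (2 * k) * 2 ^ (3 * k) ≤ 2 ^ (2 * k) * M.card := by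
      calc 2 ^ (2 * k) * 2 ^ (3 * k) = 2 ^ (5 * k) := by rw [← pow_add]; congr 1; ring
        _ ≤ N₁.card := h1
        _ ≤ 2 ^ Y'.card * M.card := hMcard
        _ = 2 ^ (2 * k) * M.card := by rw [hY'card]
    exact Nat.le_of_mul_le_mul_left h5 (Nat.pow_pos (by norm_num))
  have hMR : M ⊆ R := hMN₁.trans hN₁R
  have hWcards : Wr.card + Wb.card = 2 * k := by
    rw [← Finset.card_union_of_disjoint hWdisj, hWunion, hY'card]
  have hMadj : ∀ u ∈ M, G.Adj v u := fun u hu => hN₁adj u (hMN₁ hu)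
  rcases le_or_gt k Wb.card with hcase | hcase
  · -- blue-majority case: works for any c₂
    obtain ⟨K, hKM, hKcard, hKred⟩ := redclique (k - 1) M hMN₁
      (le_trans (Nat.pow_le_pow_right (by norm_num) (by omega)) hM3k)
    obtain ⟨Z, hZK, hZcard⟩ := Finset.exists_subset_card_eq
      (show α ≤ K.card by rw [hKcard]; omega)
    obtain ⟨Y, hYWb, hYcard⟩ := Finset.exists_subset_card_eq
      (show k - α ≤ Wb.card by omega)
    have hKR : K ⊆ R := hKM.trans hMR
    have hYB : Y ⊆ B := (hYWb.trans hWbY').trans (hY'sub.trans hN₂B)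
    have hvK : v ∉ K := fun h => hvR (hKR h)
    have hdisjKY : Disjoint K Y := Finset.disjoint_left.2
      fun a ha hay => Finset.disjoint_left.1 hdisj (hKR ha) (hYB hay)
    refine ⟨insert v (K ∪ Y), ?_, ?_, ?_, Finset.mem_insert_self _ _, ?_⟩
    · have hvKY : v ∉ K ∪ Y := by
        intro h
        rcases Finset.mem_union.1 h with h | h
        · exact hvR (hKR h)
        · exact hvB (hYB h)
      rw [Finset.card_insert_of_notMem hvKY, Finset.card_union_of_disjoint hdisjKY,
        hKcard, hYcard]
      omega
    · -- red copy: clique insert v K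
      have hclique : ∀ a ∈ insert v K, ∀ b ∈ insert v K, a ≠ b → G.Adj a b := by
        intro a ha b hb hab
        rcases Finset.mem_insert.1 ha with ha' | ha' <;>
          rcases Finset.mem_insert.1 hb with hb' | hb'
        · exact absurd (ha'.trans hb'.symm) hab
        · rw [ha']; exact hMadj b (hKM hb')
        · rw [hb']; exact (hMadj a (hKM ha')).symm
        · exact hKred a ha' b hb' hab
      have hcard : k ≤ (insert v K).card := by
        rw [Finset.card_insert_of_notMem hvK, hKcard]; omega
      refine tie_copyIn_mono ?_ (copy_clique G (insert v K) hcard hclique)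
      refine Finset.coe_subset.2 fun a ha => ?_
      rcases Finset.mem_insert.1 ha with rfl | ha
      · exact Finset.mem_insert_self _ _
      · exact Finset.mem_insert_of_mem (Finset.mem_union_left _ ha)
    · -- blue copy: split Z / Y
      have hsplit := tie_copyIn_split H Gᶜ I hIind Z Y
        (Finset.disjoint_left.2 fun a ha hay =>
          Finset.disjoint_left.1 hdisj (hKR (hZK ha)) (hYB hay))
        (by rw [hZcard, hIcard]) (by rw [hYcard, hIcard])
        (fun a ha b hb hab => (G.compl_adj a b).2
          ⟨hab, hY'blue a (hWbY' (hYWb ha)) b (hWbY' (hYWb hb)) hab⟩)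
        (fun a ha b hb => (G.compl_adj a b).2
          ⟨fun h => Finset.disjoint_left.1 hdisj (hKR (hZK ha)) (h ▸ hYB hb),
           fun h => hWblue b (hYWb hb) a (hKM (hZK ha)) h.symm⟩)
      refine tie_copyIn_mono ?_ hsplit
      rw [← Finset.coe_union]
      refine Finset.coe_subset.2 fun a ha => ?_
      rcases Finset.mem_union.1 ha with ha | ha
      · exact Finset.mem_insert_of_mem (Finset.mem_union_left _ (hZK ha))
      · exact Finset.mem_insert_of_mem (Finset.mem_union_right _ ha)
    · intro u hu huv
      rcases Finset.mem_insert.1 hu with rfl | hu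
      · exact absurd rfl huv
      rcases Finset.mem_union.1 hu with hu | hu
      · exact Finset.mem_union_left _ (hKR hu)
      · exact Finset.mem_union_right _ (hYB hu)
  · -- red-majority case
    have hWrk : k ≤ Wr.card := by omega
    have hWrB : Wr ⊆ B := hWrY'.trans (hY'sub.trans hN₂B)
    have hWrN₂ : Wr ⊆ N₂ := hWrY'.trans hY'sub
    cases c₂ with
    | true =>
      obtain ⟨X, hXM, hXcard, hXred⟩ := redclique (k - α - 1) M hMN₁
        (le_trans (Nat.pow_le_pow_right (by norm_num) (by omega)) hM3k)
      obtain ⟨W₀, hW₀, hW₀card⟩ := Finset.exists_subset_card_eq hWrk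
      obtain ⟨Z, hZ, hZcard⟩ := Finset.exists_subset_card_eq
        (show α ≤ W₀.card by rw [hW₀card]; omega)
      have hXR : X ⊆ R := hXM.trans hMR
      have hW₀B : W₀ ⊆ B := hW₀.trans hWrB
      have hvX : v ∉ X := fun h => hvR (hXR h)
      have hZN₂ : Z ⊆ N₂ := (hZ.trans hW₀).trans hWrN₂
      refine ⟨insert v (X ∪ W₀), ?_, ?_, ?_, Finset.mem_insert_self _ _, ?_⟩
      · have hvXW : v ∉ X ∪ W₀ := by
          intro h
          rcases Finset.mem_union.1 h with h | h
          · exact hvR (hXR h)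
          · exact hvB (hW₀B h)
        have hdisjXW : Disjoint X W₀ := Finset.disjoint_left.2
          fun a ha haw => Finset.disjoint_left.1 hdisj (hXR ha) (hW₀B haw)
        rw [Finset.card_insert_of_notMem hvXW, Finset.card_union_of_disjoint hdisjXW,
          hXcard, hW₀card]
        omega
      · -- red copy: split Z / insert v X
        have hsplit := tie_copyIn_split H G I hIind Z (insert v X)
          (Finset.disjoint_left.2 fun a ha hax => by
            rcases Finset.mem_insert.1 hax with rfl | hax
            · exact hvB (hW₀B (hZ ha))
            · exact Finset.disjoint_left.1 hdisj (hXR hax) (hW₀B (hZ ha)))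
          (by rw [hZcard, hIcard])
          (by rw [Finset.card_insert_of_notMem hvX, hXcard, hIcard]; omega)
          (by
            intro a ha b hb hab
            rcases Finset.mem_insert.1 ha with ha' | ha' <;>
              rcases Finset.mem_insert.1 hb with hb' | hb'
            · exact absurd (ha'.trans hb'.symm) hab
            · rw [ha']; exact hN₁adj b (hMN₁ (hXM hb'))
            · rw [hb']; exact (hN₁adj a (hMN₁ (hXM ha'))).symm
            · exact hXred a ha' b hb' hab)
          (by
            intro a ha b hb
            rcases Finset.mem_insert.1 hb with rfl | hb
            · have := hN₂adj a (hZN₂ ha)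
              simpa using this.symm
            · exact hWred a (hW₀ (hZ ha)) b (hXM hb))
        refine tie_copyIn_mono ?_ hsplit
        rw [← Finset.coe_union]
        refine Finset.coe_subset.2 fun a ha => ?_
        rcases Finset.mem_union.1 ha with ha | ha
        · exact Finset.mem_insert_of_mem (Finset.mem_union_right _ (hZ ha))
        · rcases Finset.mem_insert.1 ha with rfl | ha
          · exact Finset.mem_insert_self _ _
          · exact Finset.mem_insert_of_mem (Finset.mem_union_left _ ha)
      · -- blue copy: clique W₀
        have hclique : ∀ a ∈ W₀, ∀ b ∈ W₀, a ≠ b → Gᶜ.Adj a b := fun a ha b hb hab =>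
          (G.compl_adj a b).2 ⟨hab, hY'blue a (hWrY' (hW₀ ha)) b (hWrY' (hW₀ hb)) hab⟩
        refine tie_copyIn_mono ?_ (copy_clique Gᶜ W₀ hW₀card.ge hclique)
        exact Finset.coe_subset.2 fun a ha =>
          Finset.mem_insert_of_mem (Finset.mem_union_right _ ha)
      · intro u hu huv
        rcases Finset.mem_insert.1 hu with rfl | hu
        · exact absurd rfl huv
        rcases Finset.mem_union.1 hu with hu | hu
        · exact Finset.mem_union_left _ (hXR hu)
        · exact Finset.mem_union_right _ (hW₀B hu)
    | false =>
      obtain ⟨X, hXM, hXcard, hXred⟩ := redclique (k - α) M hMN₁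
        (le_trans (Nat.pow_le_pow_right (by norm_num) (by omega)) hM3k)
      obtain ⟨Z, hZ, hZcard⟩ := Finset.exists_subset_card_eq
        (show α - 1 ≤ Wr.card by omega)
      obtain ⟨Y, hY, hYcard⟩ := Finset.exists_subset_card_eq
        (show k - α ≤ (Wr \ Z).card by
          rw [Finset.card_sdiff_of_subset hZ, hZcard]; omega)
      have hXR : X ⊆ R := hXM.trans hMR
      have hZB : Z ⊆ B := hZ.trans hWrB
      have hYWr : Y ⊆ Wr := hY.trans (Finset.sdiff_subset)
      have hYB : Y ⊆ B := hYWr.trans hWrB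
      have hvX : v ∉ X := fun h => hvR (hXR h)
      have hvZ : v ∉ Z := fun h => hvB (hZB h)
      have hZY : Disjoint Z Y := Finset.disjoint_left.2
        fun a ha hay => (Finset.mem_sdiff.1 (hY hay)).2 ha
      have hTcard : (insert v Z).card = α := by
        rw [Finset.card_insert_of_notMem hvZ, hZcard]; omega
      have hTdisjX : Disjoint (insert v Z) X := Finset.disjoint_left.2 fun a ha hax => by
        rcases Finset.mem_insert.1 ha with rfl | ha
        · exact hvR (hXR hax)
        · exact Finset.disjoint_left.1 hdisj (hXR hax) (hZB ha)
      refine ⟨insert v (X ∪ (Z ∪ Y)), ?_, ?_, ?_, Finset.mem_insert_self _ _, ?_⟩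
      · have hvXZY : v ∉ X ∪ (Z ∪ Y) := by
          intro h
          rcases Finset.mem_union.1 h with h | h
          · exact hvR (hXR h)
          · rcases Finset.mem_union.1 h with h | h
            · exact hvB (hZB h)
            · exact hvB (hYB h)
        have hd1 : Disjoint X (Z ∪ Y) := Finset.disjoint_left.2 fun a ha hay => by
          rcases Finset.mem_union.1 hay with h | h
          · exact Finset.disjoint_left.1 hdisj (hXR ha) (hZB h)
          · exact Finset.disjoint_left.1 hdisj (hXR ha) (hYB h)
        rw [Finset.card_insert_of_notMem hvXZY, Finset.card_union_of_disjoint hd1,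
          Finset.card_union_of_disjoint hZY, hXcard, hZcard, hYcard]
        omega
      · -- red copy: split (insert v Z) / X
        have hsplit := tie_copyIn_split H G I hIind (insert v Z) X hTdisjX
          (by rw [hTcard, hIcard]) (by rw [hXcard, hIcard])
          hXred
          (by
            intro a ha b hb
            rcases Finset.mem_insert.1 ha with rfl | ha
            · exact hN₁adj b (hMN₁ (hXM hb))
            · exact hWred a (hZ ha) b (hXM hb))
        refine tie_copyIn_mono ?_ hsplit
        rw [← Finset.coe_union]
        refine Finset.coe_subset.2 fun a ha => ?_
        rcases Finset.mem_union.1 ha with ha | ha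
        · rcases Finset.mem_insert.1 ha with rfl | ha
          · exact Finset.mem_insert_self _ _
          · exact Finset.mem_insert_of_mem
              (Finset.mem_union_right _ (Finset.mem_union_left _ ha))
        · exact Finset.mem_insert_of_mem (Finset.mem_union_left _ ha)
      · -- blue copy: split (insert v Z) / Y
        have hTdisjY : Disjoint (insert v Z) Y := Finset.disjoint_left.2 fun a ha hay => by
          rcases Finset.mem_insert.1 ha with rfl | ha
          · exact hvB (hYB hay)
          · exact Finset.disjoint_left.1 hZY ha hay
        have hsplit := tie_copyIn_split H Gᶜ I hIind (insert v Z) Y hTdisjY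
          (by rw [hTcard, hIcard]) (by rw [hYcard, hIcard])
          (fun a ha b hb hab => (G.compl_adj a b).2
            ⟨hab, hY'blue a (hWrY' (hYWr ha)) b (hWrY' (hYWr hb)) hab⟩)
          (by
            intro a ha b hb
            rcases Finset.mem_insert.1 ha with ha' | ha'
            · rw [ha']
              refine (G.compl_adj v b).2 ⟨fun h => hvB (hYB (h ▸ hb)), ?_⟩
              have := hN₂adj b (hWrN₂ (hYWr hb))
              simpa using this
            · refine (G.compl_adj a b).2 ⟨fun h => Finset.disjoint_left.1 hZY ha' (h ▸ hb), ?_⟩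
              exact hY'blue a (hWrY' (hZ ha')) b (hWrY' (hYWr hb))
                (fun h => Finset.disjoint_left.1 hZY ha' (h ▸ hb))
          )
        refine tie_copyIn_mono ?_ hsplit
        rw [← Finset.coe_union]
        refine Finset.coe_subset.2 fun a ha => ?_
        rcases Finset.mem_union.1 ha with ha | ha
        · rcases Finset.mem_insert.1 ha with rfl | ha
          · exact Finset.mem_insert_self _ _
          · exact Finset.mem_insert_of_mem
              (Finset.mem_union_right _ (Finset.mem_union_left _ ha))
        · exact Finset.mem_insert_of_mem
            (Finset.mem_union_right _ (Finset.mem_union_right _ ha))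
      · intro u hu huv
        rcases Finset.mem_insert.1 hu with rfl | hu
        · exact absurd rfl huv
        rcases Finset.mem_union.1 hu with hu | hu
        · exact Finset.mem_union_left _ (hXR hu)
        · rcases Finset.mem_union.1 hu with hu | hu
          · exact Finset.mem_union_right _ (hZB hu)
          · exact Finset.mem_union_right _ (hYB hu)

/-- Claim 4.5, tie-finding. Let `H` be a `k`-vertex graph with at least
one edge. In a 2-coloured complete graph with disjoint sets `R`, `B` of size at least
`2·2^(5k)` such that `R` has no blue copy of `H` and `B` has no red copy of `H`, if a vertex
`v ∉ R ∪ B` has at least `2^(5k)` neighbours of colour `c₁` in `R` and at least `2^(5k)`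
neighbours of colour `c₂` in `B`, and it is not the case that `c₁` is blue and `c₂` is red,
then there is an `H`-tie containing `v` with all other vertices in `R ∪ B`.
(`true` is red, `false` is blue.) -/
theorem exists_tie {V : Type*} [Fintype V] [DecidableEq V] (k : ℕ)
    (H : SimpleGraph (Fin k)) (hedge : ∃ a b, H.Adj a b)
    (Red : SimpleGraph V) (R B : Finset V) (hdisj : Disjoint R B)
    (hR : 2 * 2 ^ (5 * k) ≤ R.card) (hB : 2 * 2 ^ (5 * k) ≤ B.card)
    (hRblue : ¬ H.CopyIn Redᶜ ↑R) (hBred : ¬ H.CopyIn Red ↑B)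
    (v : V) (hv : v ∉ R ∪ B) (c₁ c₂ : Bool)
    (h1 : 2 ^ (5 * k) ≤ ((↑R : Set V) ∩ {u | Red.colorAdj c₁ v u}).ncard)
    (h2 : 2 ^ (5 * k) ≤ ((↑B : Set V) ∩ {u | Red.colorAdj c₂ v u}).ncard)
    (hnot : ¬ (c₁ = false ∧ c₂ = true)) :
    ∃ S : Finset V, H.IsTie Red S ∧ v ∈ S ∧ ∀ u ∈ S, u ≠ v → u ∈ R ∪ B := by
  classical
  have hconv : ∀ (A : Finset V) (c : Bool),
      ((↑A : Set V) ∩ {u | Red.colorAdj c v u}).ncard =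
        (A.filter fun u => Red.colorAdj c v u).card := by
    intro A c
    rw [← Set.ncard_coe_finset]
    congr 1
    ext u
    simp only [Finset.coe_filter, Set.mem_setOf_eq, Set.mem_inter_iff, Finset.mem_coe]
  rw [hconv] at h1 h2
  cases c₁ with
  | true =>
    have main := tie_main k H hedge Red R B hdisj hRblue hBred v hv c₂
      (R.filter fun u => Red.colorAdj true v u) (B.filter fun u => Red.colorAdj c₂ v u)
      (Finset.filter_subset _ _) (Finset.filter_subset _ _)
      (fun u hu => by
        have := (Finset.mem_filter.1 hu).2
        simpa [SimpleGraph.colorAdj] using this)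
      (fun u hu => by
        have := (Finset.mem_filter.1 hu).2
        cases c₂ with
        | true => simpa [SimpleGraph.colorAdj] using this
        | false =>
          simp only [SimpleGraph.colorAdj, if_false, Bool.false_eq_true, if_neg] at this ⊢
          simp only [SimpleGraph.compl_adj] at this
          exact fun h => this.2 h)
      h1 h2
    obtain ⟨S, hcard, hred, hblue, hvS, hrest⟩ := main
    exact ⟨S, ⟨hcard, hred, hblue⟩, hvS, hrest⟩
  | false =>
    have hc₂ : c₂ = false := by simpa using hnot
    subst hc₂
    have hBR : ¬ H.CopyIn Redᶜᶜ ↑B := by rw [compl_compl]; exact hBred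
    have hv' : v ∉ B ∪ R := by rw [Finset.union_comm]; exact hv
    have main := tie_main k H hedge Redᶜ B R hdisj.symm hBR hRblue v hv' true
      (B.filter fun u => Red.colorAdj false v u) (R.filter fun u => Red.colorAdj false v u)
      (Finset.filter_subset _ _) (Finset.filter_subset _ _)
      (fun u hu => by
        have := (Finset.mem_filter.1 hu).2
        simpa [SimpleGraph.colorAdj] using this)
      (fun u hu => by
        have := (Finset.mem_filter.1 hu).2
        simpa [SimpleGraph.colorAdj] using this)
      h2 h1
    obtain ⟨S, hcard, hred, hblue, hvS, hrest⟩ := main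
    rw [compl_compl] at hblue
    refine ⟨S, ⟨hcard, hblue, hred⟩, hvS, fun u hu huv => ?_⟩
    have := hrest u hu huv
    rw [Finset.union_comm]
    exact this
end
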